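/- arXiv:1703.00329 — 5 statements merged into one kernel-verified Lean document; each statement's English description precedes it below -/
import Mathlib

section
/- Let S be a real random variable such that max(P(S > u), P(−S > u)) ≤ e^{−u²/(2v)} for all u ≥ 0, where v > 0. For θ > 0 set λ = θ√v. Then E[e^{−θ|S|}] ≥ 1 − 2√(2π) λ e^{λ²/2} (1 − Φ(λ)), where Φ(λ) = P(G ≤ λ) is the cumulative distribution function of a standard Gaussian random variable G. -/
open MeasureTheory ProbabilityTheory
open scoped ENNReal Real

private lemma integral_comp_add_right_Ioi' (g : ℝ → ℝ) (a d : ℝ) :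
    (∫ x in Set.Ioi a, g (x + d)) = ∫ x in Set.Ioi (a + d), g x := by
  rw [← integral_indicator measurableSet_Ioi, ← integral_indicator measurableSet_Ioi,
    ← MeasureTheory.integral_add_right_eq_self (Set.indicator (Set.Ioi (a + d)) g) d]
  congr 1
  ext x
  rw [← Set.indicator_comp_right (fun x : ℝ => x + d)]
  simp [Set.preimage_add_const_Ioi]
  rfl

private lemma exp_key' {v : ℝ} (θ : ℝ) (hv : 0 < v) (t : ℝ) :
    2 * Real.exp (-t ^ 2 / (2 * v)) * (θ * Real.exp (-θ * t)) =
      (2 * θ * Real.exp ((θ * Real.sqrt v) ^ 2 / 2)) *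
        Real.exp (-(1 / (2 * v)) * (t + θ * v) ^ 2) := by
  have hsv : Real.sqrt v ^ 2 = v := Real.sq_sqrt hv.le
  have h1 : -t ^ 2 / (2 * v) + -θ * t
      = (θ * Real.sqrt v) ^ 2 / 2 + -(1 / (2 * v)) * (t + θ * v) ^ 2 := by
    rw [mul_pow, hsv]; field_simp; ring
  calc 2 * Real.exp (-t ^ 2 / (2 * v)) * (θ * Real.exp (-θ * t))
      = 2 * θ * Real.exp (-t ^ 2 / (2 * v) + -θ * t) := by rw [Real.exp_add]; ring
    _ = 2 * θ * (Real.exp ((θ * Real.sqrt v) ^ 2 / 2) *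
          Real.exp (-(1 / (2 * v)) * (t + θ * v) ^ 2)) := by rw [← Real.exp_add, h1]
    _ = _ := by ring

private lemma gauss_tail' (l : ℝ) :
    ∫ s in Set.Ioi l, Real.exp (-s ^ 2 / 2) =
      Real.sqrt (2 * π) * (1 - (gaussianReal 0 1 (Set.Iic l)).toReal) := by
  have hpdf : ∀ x : ℝ, gaussianPDFReal 0 1 x
      = (Real.sqrt (2 * π))⁻¹ * Real.exp (-x ^ 2 / 2) := by
    intro x
    simp [gaussianPDFReal]
  have hint := integrable_gaussianPDFReal 0 1
  have hΦ : (gaussianReal 0 1 (Set.Iic l)).toReal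
      = ∫ x in Set.Iic l, gaussianPDFReal 0 1 x := by
    rw [gaussianReal_apply_eq_integral 0 one_ne_zero, ENNReal.toReal_ofReal]
    exact setIntegral_nonneg measurableSet_Iic fun x _ => gaussianPDFReal_nonneg 0 1 x
  have hsplit := integral_add_compl (measurableSet_Iic (a := l)) hint
  rw [Set.compl_Iic, integral_gaussianPDFReal_eq_one 0 one_ne_zero] at hsplit
  have hIoi : ∫ x in Set.Ioi l, gaussianPDFReal 0 1 x
      = 1 - (gaussianReal 0 1 (Set.Iic l)).toReal := by
    rw [hΦ]; linarith
  have hπ : (0:ℝ) < Real.sqrt (2 * π) := Real.sqrt_pos.mpr (by positivity)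
  calc ∫ s in Set.Ioi l, Real.exp (-s ^ 2 / 2)
      = ∫ s in Set.Ioi l, Real.sqrt (2 * π) * gaussianPDFReal 0 1 s := by
        refine setIntegral_congr_fun measurableSet_Ioi fun s _ => ?_
        rw [hpdf s, ← mul_assoc, mul_inv_cancel₀ hπ.ne', one_mul]
    _ = Real.sqrt (2 * π) * ∫ s in Set.Ioi l, gaussianPDFReal 0 1 s :=
        integral_const_mul _ _
    _ = _ := by rw [hIoi]

private lemma tail_integral' (v θ : ℝ) (hv : 0 < v) (hθ : 0 < θ) :
    ∫ t in Set.Ioi (0:ℝ), 2 * Real.exp (-t ^ 2 / (2 * v)) * (θ * Real.exp (-θ * t)) =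
      2 * Real.sqrt (2 * π) * (θ * Real.sqrt v) *
        Real.exp ((θ * Real.sqrt v) ^ 2 / 2) *
        (1 - (gaussianReal 0 1 (Set.Iic (θ * Real.sqrt v))).toReal) := by
  set l := θ * Real.sqrt v with hl
  have hsv : Real.sqrt v ^ 2 = v := Real.sq_sqrt hv.le
  have hsvpos : 0 < Real.sqrt v := Real.sqrt_pos.mpr hv
  rw [setIntegral_congr_fun measurableSet_Ioi fun t _ => exp_key' θ hv t, integral_const_mul,
    integral_comp_add_right_Ioi' (fun t => Real.exp (-(1 / (2 * v)) * t ^ 2)) 0 (θ * v), zero_add]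
  have hscale : ∫ t in Set.Ioi (θ * v), Real.exp (-(1 / (2 * v)) * t ^ 2)
      = Real.sqrt v * ∫ s in Set.Ioi l, Real.exp (-s ^ 2 / 2) := by
    have h := integral_comp_mul_left_Ioi
      (fun t => Real.exp (-(1 / (2 * v)) * t ^ 2)) l hsvpos
    have harg : ∀ s : ℝ, Real.exp (-(1 / (2 * v)) * (Real.sqrt v * s) ^ 2)
        = Real.exp (-s ^ 2 / 2) := by
      intro s
      congr 1
      rw [mul_pow, hsv]
      field_simp
    have heq : Real.sqrt v * l = θ * v := by rw [hl]; nlinarith [hsv]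
    simp only [harg, heq] at h
    rw [h, smul_eq_mul, ← mul_assoc, mul_inv_cancel₀ hsvpos.ne', one_mul]
  rw [hscale, gauss_tail']
  ring

/-- If `S` is sub-Gaussian with variance factor `v`, i.e.
`max (P(S > u), P(-S > u)) ≤ e^{-u²/(2v)}` for all `u ≥ 0`, then for `θ > 0` and
`λ = θ √v`, `E[e^{-θ |S|}] ≥ 1 - 2 √(2π) λ e^{λ²/2} (1 - Φ(λ))`, where `Φ` is the standard
Gaussian cumulative distribution function. -/
theorem mgf_abs_subGaussian_lower
    {Ω : Type*} [MeasurableSpace Ω] (μ : Measure Ω) [IsProbabilityMeasure μ]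
    (S : Ω → ℝ) (hS : Measurable S) (v θ : ℝ) (hv : 0 < v) (hθ : 0 < θ)
    (hsub : ∀ u : ℝ, 0 ≤ u →
      μ {ω | S ω > u} ≤ ENNReal.ofReal (Real.exp (-u ^ 2 / (2 * v))) ∧
      μ {ω | -S ω > u} ≤ ENNReal.ofReal (Real.exp (-u ^ 2 / (2 * v)))) :
    1 - 2 * Real.sqrt (2 * π) * (θ * Real.sqrt v) *
        Real.exp ((θ * Real.sqrt v) ^ 2 / 2) *
        (1 - (gaussianReal 0 1 (Set.Iic (θ * Real.sqrt v))).toReal) ≤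
      ∫ ω, Real.exp (-θ * |S ω|) ∂μ := by
  have hφm : Measurable fun ω => Real.exp (-θ * |S ω|) :=
    (measurable_const.mul hS.abs).exp
  have hφle : ∀ ω, Real.exp (-θ * |S ω|) ≤ 1 := fun ω =>
    Real.exp_le_one_iff.mpr (by nlinarith [abs_nonneg (S ω)])
  have hφint : Integrable (fun ω => Real.exp (-θ * |S ω|)) μ := by
    refine Integrable.mono' (integrable_const 1) hφm.aestronglyMeasurable ?_
    filter_upwards with ω
    rw [Real.norm_eq_abs, abs_of_pos (Real.exp_pos _)]
    exact hφle ω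
  have hsum : ∫ ω, (1 - Real.exp (-θ * |S ω|)) ∂μ
      = 1 - ∫ ω, Real.exp (-θ * |S ω|) ∂μ := by
    rw [integral_sub (integrable_const 1) hφint, integral_const]
    simp
  have hgcont : Continuous fun t : ℝ => θ * Real.exp (-θ * t) :=
    continuous_const.mul (Real.continuous_exp.comp (continuous_const.mul continuous_id))
  have hint : ∀ a : ℝ, ∫ t in (0:ℝ)..a, θ * Real.exp (-θ * t) = 1 - Real.exp (-θ * a) := by
    intro a
    have hderiv : ∀ t ∈ Set.uIcc (0:ℝ) a,
        HasDerivAt (fun u : ℝ => -Real.exp (-θ * u)) (θ * Real.exp (-θ * t)) t := by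
      intro t _
      have h1 : HasDerivAt (fun u : ℝ => -θ * u) (-θ) t := by
        simpa using (hasDerivAt_id t).const_mul (-θ)
      have h3 := (h1.exp).neg
      exact h3.congr_deriv (by ring)
    rw [intervalIntegral.integral_eq_sub_of_hasDerivAt hderiv
      (hgcont.intervalIntegrable _ _)]
    simp [mul_comm]
    ring
  -- layer cake formula
  have e1 : ∫⁻ ω, ENNReal.ofReal (1 - Real.exp (-θ * |S ω|)) ∂μ
      = ∫⁻ t in Set.Ioi (0:ℝ),
          μ {a | t < |S a|} * ENNReal.ofReal (θ * Real.exp (-θ * t)) := by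
    have h := lintegral_comp_eq_lintegral_meas_lt_mul μ (f := fun ω => |S ω|)
      (g := fun t => θ * Real.exp (-θ * t))
      (Filter.Eventually.of_forall fun ω => abs_nonneg _) hS.abs.aemeasurable
      (fun t _ => hgcont.intervalIntegrable _ _)
      (Filter.Eventually.of_forall fun t => by positivity)
    simp_rw [hint] at h
    exact h
  -- bound the tail
  have e2 : ∫⁻ t in Set.Ioi (0:ℝ),
        μ {a | t < |S a|} * ENNReal.ofReal (θ * Real.exp (-θ * t))
      ≤ ∫⁻ t in Set.Ioi (0:ℝ),
        ENNReal.ofReal (2 * Real.exp (-t ^ 2 / (2 * v)) * (θ * Real.exp (-θ * t))) := by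
    refine lintegral_mono_ae ?_
    filter_upwards [ae_restrict_mem measurableSet_Ioi] with t ht
    have hsubset : {a | t < |S a|} ⊆ {a | S a > t} ∪ {a | -S a > t} := by
      intro a ha
      rcases lt_abs.mp (show t < |S a| from ha) with h | h
      · exact Or.inl h
      · exact Or.inr (by simpa using h)
    have htail : μ {a | t < |S a|} ≤ ENNReal.ofReal (2 * Real.exp (-t ^ 2 / (2 * v))) := by
      calc μ {a | t < |S a|} ≤ μ ({a | S a > t} ∪ {a | -S a > t}) := measure_mono hsubset
        _ ≤ μ {a | S a > t} + μ {a | -S a > t} := measure_union_le _ _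
        _ ≤ ENNReal.ofReal (Real.exp (-t ^ 2 / (2 * v)))
            + ENNReal.ofReal (Real.exp (-t ^ 2 / (2 * v))) :=
            add_le_add (hsub t (le_of_lt ht)).1 (hsub t (le_of_lt ht)).2
        _ = ENNReal.ofReal (2 * Real.exp (-t ^ 2 / (2 * v))) := by
            rw [← ENNReal.ofReal_add (by positivity) (by positivity)]
            ring_nf
    rw [show ENNReal.ofReal (2 * Real.exp (-t ^ 2 / (2 * v)) * (θ * Real.exp (-θ * t)))
        = ENNReal.ofReal (2 * Real.exp (-t ^ 2 / (2 * v)))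
          * ENNReal.ofReal (θ * Real.exp (-θ * t)) from ENNReal.ofReal_mul (by positivity)]
    exact mul_le_mul_left htail _
  -- integrability of the dominating function
  have hIntOn : IntegrableOn
      (fun t : ℝ => 2 * Real.exp (-t ^ 2 / (2 * v)) * (θ * Real.exp (-θ * t)))
      (Set.Ioi 0) volume := by
    have hbase : Integrable (fun t : ℝ =>
        (2 * θ * Real.exp ((θ * Real.sqrt v) ^ 2 / 2)) *
          Real.exp (-(1 / (2 * v)) * (t + θ * v) ^ 2)) volume :=
      ((integrable_exp_neg_mul_sq (by positivity)).comp_add_right (θ * v)).const_mul _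
    exact (hbase.congr (Filter.Eventually.of_forall fun t =>
      (exp_key' θ hv t).symm)).integrableOn
  have e3 : ∫⁻ t in Set.Ioi (0:ℝ),
        ENNReal.ofReal (2 * Real.exp (-t ^ 2 / (2 * v)) * (θ * Real.exp (-θ * t)))
      = ENNReal.ofReal (∫ t in Set.Ioi (0:ℝ),
          2 * Real.exp (-t ^ 2 / (2 * v)) * (θ * Real.exp (-θ * t))) :=
    (ofReal_integral_eq_lintegral_ofReal hIntOn
      (Filter.Eventually.of_forall fun t => by positivity)).symm
  have hInonneg : (0:ℝ) ≤ ∫ t in Set.Ioi (0:ℝ),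
      2 * Real.exp (-t ^ 2 / (2 * v)) * (θ * Real.exp (-θ * t)) :=
    setIntegral_nonneg measurableSet_Ioi fun t _ => by positivity
  have e0 : ∫ ω, (1 - Real.exp (-θ * |S ω|)) ∂μ
      = (∫⁻ ω, ENNReal.ofReal (1 - Real.exp (-θ * |S ω|)) ∂μ).toReal := by
    rw [integral_eq_lintegral_of_nonneg_ae (f := fun ω => 1 - Real.exp (-θ * |S ω|))
      (Filter.Eventually.of_forall fun ω => by simp only [Pi.zero_apply]; linarith [hφle ω])
      ((measurable_const.sub hφm).aestronglyMeasurable)]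
  have hmain : ∫ ω, (1 - Real.exp (-θ * |S ω|)) ∂μ
      ≤ 2 * Real.sqrt (2 * π) * (θ * Real.sqrt v) *
        Real.exp ((θ * Real.sqrt v) ^ 2 / 2) *
        (1 - (gaussianReal 0 1 (Set.Iic (θ * Real.sqrt v))).toReal) := by
    rw [e0, ← tail_integral' v θ hv hθ]
    refine le_trans (ENNReal.toReal_mono ENNReal.ofReal_ne_top ?_)
      (le_of_eq (ENNReal.toReal_ofReal hInonneg))
    rw [e1, ← e3]
    exact e2
  linarith [hsum, hmain]
end

section
/- Let m* = max_{x,y∈E} ( H_{x,y} − max(J(x), J(y)) ) and m*_HS = max_{x,y∈E} ( H_{x,y} − J(x) − J(y) + min_{u∈E} J(u) ). Then m* = m*_HS. -/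
open scoped BigOperators

/-- A path from `x` to `y` for the neighbourhood relation `S` is a finite sequence
`f 0 = x, …, f n = y` with consecutive elements neighbours. -/
def IsPath {E : Type*} (S : E → E → Prop) (x y : E) (n : ℕ) (f : ℕ → E) : Prop :=
  f 0 = x ∧ f n = y ∧ ∀ i < n, S (f i) (f (i + 1))

/-- `elevation S J x y = H_{x,y}`, the minimum over paths `p` from `x` to `y` of
`max_{z ∈ p} J z`. -/
noncomputable def elevation {E : Type*} (S : E → E → Prop) (J : E → ℝ) (x y : E) : ℝ :=
  sInf {h : ℝ | ∃ (n : ℕ) (f : ℕ → E), IsPath S x y n f ∧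
    h = (Finset.range (n + 1)).sup' Finset.nonempty_range_add_one (fun i => J (f i))}

/-- `m* = max_{x,y} (H_{x,y} - max (J x) (J y))`. -/
noncomputable def mstar {E : Type*} [Fintype E] [Nonempty E]
    (S : E → E → Prop) (J : E → ℝ) : ℝ :=
  Finset.univ.sup' Finset.univ_nonempty fun x =>
    Finset.univ.sup' Finset.univ_nonempty fun y =>
      elevation S J x y - max (J x) (J y)

/-- `m*_HS = max_{x,y} (H_{x,y} - J x - J y + min J)`, the constant of Holley and Strook. -/
noncomputable def mstarHS {E : Type*} [Fintype E] [Nonempty E]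
    (S : E → E → Prop) (J : E → ℝ) : ℝ :=
  Finset.univ.sup' Finset.univ_nonempty fun x =>
    Finset.univ.sup' Finset.univ_nonempty fun y =>
      elevation S J x y - J x - J y + Finset.univ.inf' Finset.univ_nonempty J

def elevSet {E : Type*} (S : E → E → Prop) (J : E → ℝ) (x y : E) : Set ℝ :=
  {h : ℝ | ∃ (n : ℕ) (f : ℕ → E), IsPath S x y n f ∧
    h = (Finset.range (n + 1)).sup' Finset.nonempty_range_add_one (fun i => J (f i))}

lemma mem_elevSet_ge {E : Type*} {S : E → E → Prop} {J : E → ℝ} {x y : E}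
    {h : ℝ} (hh : h ∈ elevSet S J x y) : J x ≤ h ∧ J y ≤ h := by
  obtain ⟨n, f, ⟨h0, hn, _⟩, rfl⟩ := hh
  constructor
  · rw [← h0]
    exact Finset.le_sup' (fun i => J (f i)) (Finset.mem_range.2 (Nat.succ_pos n))
  · rw [← hn]
    exact Finset.le_sup' (fun i => J (f i)) (Finset.mem_range.2 (Nat.lt_succ_self n))

lemma elevSet_nonempty {E : Type*} {S : E → E → Prop}
    (hconn : ∀ a b : E, ∃ (n : ℕ) (f : ℕ → E), IsPath S a b n f)
    (J : E → ℝ) (x y : E) : (elevSet S J x y).Nonempty := by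
  obtain ⟨n, f, hp⟩ := hconn x y
  exact ⟨_, n, f, hp, rfl⟩

lemma elevSet_bddBelow {E : Type*} (S : E → E → Prop) (J : E → ℝ) (x y : E) :
    BddBelow (elevSet S J x y) :=
  ⟨J x, fun h hh => (mem_elevSet_ge hh).1⟩

lemma le_elevation_left {E : Type*} {S : E → E → Prop}
    (hconn : ∀ a b : E, ∃ (n : ℕ) (f : ℕ → E), IsPath S a b n f)
    (J : E → ℝ) (x y : E) : J x ≤ elevation S J x y :=
  le_csInf (elevSet_nonempty hconn J x y) (fun h hh => (mem_elevSet_ge hh).1)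

lemma le_elevation_right {E : Type*} {S : E → E → Prop}
    (hconn : ∀ a b : E, ∃ (n : ℕ) (f : ℕ → E), IsPath S a b n f)
    (J : E → ℝ) (x y : E) : J y ≤ elevation S J x y :=
  le_csInf (elevSet_nonempty hconn J x y) (fun h hh => (mem_elevSet_ge hh).2)

lemma elevation_le_max_mem {E : Type*} {S : E → E → Prop} {J : E → ℝ} {x u y : E}
    {h1 h2 : ℝ} (hh1 : h1 ∈ elevSet S J x u) (hh2 : h2 ∈ elevSet S J u y) :
    elevation S J x y ≤ max h1 h2 := by
  obtain ⟨n, f, ⟨hf0, hfn, hfs⟩, rfl⟩ := hh1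
  obtain ⟨m, g, ⟨hg0, hgm, hgs⟩, rfl⟩ := hh2
  set F : ℕ → E := fun i => if i ≤ n then f i else g (i - n) with hF
  have hFlow : ∀ i, i ≤ n → F i = f i := fun i hi => by simp [hF, hi]
  have hFhigh : ∀ i, n ≤ i → F i = g (i - n) := by
    intro i hi
    rcases eq_or_lt_of_le hi with rfl | hlt
    · simp [hF, hfn, ← hg0]
    · simp [hF, Nat.not_le.2 hlt]
  have hpath : IsPath S x y (n + m) F := by
    refine ⟨by rw [hFlow 0 (Nat.zero_le n), hf0], ?_, ?_⟩
    · rw [hFhigh (n + m) (Nat.le_add_right n m), Nat.add_sub_cancel_left, hgm]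
    · intro i hi
      by_cases hin : i < n
      · rw [hFlow i (le_of_lt hin), hFlow (i+1) hin]
        exact hfs i hin
      · push_neg at hin
        rw [hFhigh i hin, hFhigh (i+1) (le_trans hin (Nat.le_succ i)),
          Nat.succ_sub hin]
        exact hgs (i - n) (by omega)
  have hmem : (Finset.range (n + m + 1)).sup' Finset.nonempty_range_add_one
      (fun i => J (F i)) ∈ elevSet S J x y := ⟨n + m, F, hpath, rfl⟩
  refine le_trans (csInf_le (elevSet_bddBelow S J x y) hmem) ?_
  apply Finset.sup'_le
  intro i hi
  rw [Finset.mem_range] at hi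
  by_cases hin : i ≤ n
  · rw [hFlow i hin]
    exact le_max_of_le_left
      (Finset.le_sup' (fun i => J (f i)) (Finset.mem_range.2 (by omega)))
  · push_neg at hin
    rw [hFhigh i (le_of_lt hin)]
    exact le_max_of_le_right
      (Finset.le_sup' (fun i => J (g i)) (Finset.mem_range.2 (by omega)))

lemma elevation_le_max {E : Type*} {S : E → E → Prop}
    (hconn : ∀ a b : E, ∃ (n : ℕ) (f : ℕ → E), IsPath S a b n f)
    (J : E → ℝ) (x u y : E) :
    elevation S J x y ≤ max (elevation S J x u) (elevation S J u y) := by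
  by_contra hcon
  push_neg at hcon
  have h1 := max_lt_iff.1 hcon
  obtain ⟨a, ha, halt⟩ := exists_lt_of_csInf_lt (elevSet_nonempty hconn J x u) h1.1
  obtain ⟨b, hb, hblt⟩ := exists_lt_of_csInf_lt (elevSet_nonempty hconn J u y) h1.2
  exact absurd (elevation_le_max_mem ha hb) (not_le.2 (max_lt halt hblt))

/-- The two definitions of the critical depth coincide: `m* = m*_HS`. -/
theorem mstar_eq_mstarHS
    {E : Type*} [Fintype E] [Nonempty E] (S : E → E → Prop)
    (hsym : ∀ a b, S a b → S b a)
    (hconn : ∀ a b : E, ∃ (n : ℕ) (f : ℕ → E), IsPath S a b n f)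
    (J : E → ℝ) :
    mstar S J = mstarHS S J := by
  obtain ⟨u0, hu0mem, hu0⟩ := Finset.exists_mem_eq_inf' (Finset.univ_nonempty (α := E)) J
  apply le_antisymm
  · apply Finset.sup'_le; intro x _; apply Finset.sup'_le; intro y _
    have htri := elevation_le_max hconn J x u0 y
    rcases max_cases (elevation S J x u0) (elevation S J u0 y) with ⟨heq, hge⟩ | ⟨heq, hge⟩
    · have key : elevation S J x y - max (J x) (J y) ≤
          elevation S J x u0 - J x - J u0 + Finset.univ.inf' Finset.univ_nonempty J := by
        rw [← hu0]
        have : J x ≤ max (J x) (J y) := le_max_left _ _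
        rw [heq] at htri
        linarith
      refine le_trans key ?_
      refine le_trans (Finset.le_sup' (fun y' => elevation S J x y' - J x - J y' +
        Finset.univ.inf' Finset.univ_nonempty J) (Finset.mem_univ u0)) ?_
      exact Finset.le_sup' (fun x' => Finset.univ.sup' Finset.univ_nonempty fun y' =>
        elevation S J x' y' - J x' - J y' + Finset.univ.inf' Finset.univ_nonempty J)
        (Finset.mem_univ x)
    · have key : elevation S J x y - max (J x) (J y) ≤
          elevation S J u0 y - J u0 - J y + Finset.univ.inf' Finset.univ_nonempty J := by
        rw [← hu0]
        have : J y ≤ max (J x) (J y) := le_max_right _ _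
        rw [heq] at htri
        linarith
      refine le_trans key ?_
      refine le_trans (Finset.le_sup' (fun y' => elevation S J u0 y' - J u0 - J y' +
        Finset.univ.inf' Finset.univ_nonempty J) (Finset.mem_univ y)) ?_
      exact Finset.le_sup' (fun x' => Finset.univ.sup' Finset.univ_nonempty fun y' =>
        elevation S J x' y' - J x' - J y' + Finset.univ.inf' Finset.univ_nonempty J)
        (Finset.mem_univ u0)
  · apply Finset.sup'_le; intro x _; apply Finset.sup'_le; intro y _
    have key : elevation S J x y - J x - J y + Finset.univ.inf' Finset.univ_nonempty J ≤
        elevation S J x y - max (J x) (J y) := by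
      have hx : Finset.univ.inf' Finset.univ_nonempty J ≤ J x :=
        Finset.inf'_le J (Finset.mem_univ x)
      have hy : Finset.univ.inf' Finset.univ_nonempty J ≤ J y :=
        Finset.inf'_le J (Finset.mem_univ y)
      rcases max_cases (J x) (J y) with ⟨heq, _⟩ | ⟨heq, _⟩ <;> rw [heq] <;> linarith
    refine le_trans key ?_
    refine le_trans (Finset.le_sup' (fun y' => elevation S J x y' - max (J x) (J y'))
      (Finset.mem_univ y)) ?_
    exact Finset.le_sup' (fun x' => Finset.univ.sup' Finset.univ_nonempty fun y' =>
      elevation S J x' y' - max (J x') (J y')) (Finset.mem_univ x)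
end

section
/- If x* ∈ E is a global minimum of J, i.e. J(x*) = min_{u∈E} J(u), then m* = max_{y∈E} ( H_{x*,y} − J(y) ), where m* = max_{x,y∈E} ( H_{x,y} − max(J(x), J(y)) ). -/
open scoped BigOperators

set_option linter.unusedSectionVars false

namespace MstarAux

variable {E : Type*} [Fintype E] (S : E → E → Prop) (J : E → ℝ)

def ESet (x y : E) : Set ℝ :=
  {h : ℝ | ∃ (n : ℕ) (f : ℕ → E), IsPath S x y n f ∧
    h = (Finset.range (n + 1)).sup' Finset.nonempty_range_add_one (fun i => J (f i))}

lemma ESet_finite (x y : E) : (ESet S J x y).Finite := by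
  apply (Set.finite_range J).subset
  rintro h ⟨n, f, hp, rfl⟩
  obtain ⟨i, hi, he⟩ := Finset.exists_mem_eq_sup' (Finset.nonempty_range_add_one (n := n))
    (fun i => J (f i))
  exact ⟨f i, he.symm⟩

lemma elevation_mem (hconn : ∀ a b : E, ∃ n f, IsPath S a b n f) (x y : E) :
    elevation S J x y ∈ ESet S J x y := by
  obtain ⟨n, f, hp⟩ := hconn x y
  exact Set.Nonempty.csInf_mem ⟨_, n, f, hp, rfl⟩ (ESet_finite S J x y)

lemma elevation_le {x y : E} {h : ℝ} (hh : h ∈ ESet S J x y) : elevation S J x y ≤ h :=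
  csInf_le (ESet_finite S J x y).bddBelow hh

lemma mem_rev (hsym : ∀ a b, S a b → S b a) {x y : E} {h : ℝ}
    (hh : h ∈ ESet S J x y) : h ∈ ESet S J y x := by
  obtain ⟨n, f, ⟨h0, hn, hs⟩, rfl⟩ := hh
  refine ⟨n, fun i => f (n - i), ⟨by simp [hn], by simp [h0], ?_⟩, ?_⟩
  · intro i hi
    have h1 : n - i = (n - (i + 1)) + 1 := by omega
    show S (f (n - i)) (f (n - (i + 1)))
    rw [h1]
    exact hsym _ _ (hs (n - (i + 1)) (by omega))
  · apply le_antisymm <;> apply Finset.sup'_le <;> intro i hi <;>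
      simp only [Finset.mem_range] at hi
    · have hm : n - i ∈ Finset.range (n + 1) := by simp
      calc J (f i) = J (f (n - (n - i))) := by congr 2; omega
        _ ≤ _ := Finset.le_sup' (fun j => J (f (n - j))) hm
    · have hm : n - i ∈ Finset.range (n + 1) := by simp
      exact Finset.le_sup' (fun j => J (f j)) hm

lemma elevation_symm (hsym : ∀ a b, S a b → S b a)
    (hconn : ∀ a b : E, ∃ n f, IsPath S a b n f) (x y : E) :
    elevation S J x y = elevation S J y x :=
  le_antisymm
    (elevation_le S J (mem_rev S J hsym (elevation_mem S J hconn y x)))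
    (elevation_le S J (mem_rev S J hsym (elevation_mem S J hconn x y)))

lemma concat_mem {x y z : E} {a b : ℝ} (ha : a ∈ ESet S J x y) (hb : b ∈ ESet S J y z) :
    ∃ c ∈ ESet S J x z, c ≤ max a b := by
  obtain ⟨n, f, ⟨f0, fn, fs⟩, rfl⟩ := ha
  obtain ⟨m, g, ⟨g0, gm, gs⟩, rfl⟩ := hb
  set p : ℕ → E := fun i => if i ≤ n then f i else g (i - n) with hp
  have hpg : ∀ i, n ≤ i → p i = g (i - n) := by
    intro i hi
    rcases eq_or_lt_of_le hi with h | h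
    · simp [hp, ← h, fn, ← g0]
    · simp [hp, Nat.not_le.mpr h]
  refine ⟨_, ⟨n + m, p, ⟨by simp [hp, f0], by rw [hpg _ (by omega)]; simpa using gm, ?_⟩, rfl⟩, ?_⟩
  · intro i hi
    by_cases hin : i < n
    · have : p i = f i := by simp [hp, hin.le]
      have h2 : p (i + 1) = f (i + 1) := by simp [hp, show i + 1 ≤ n from hin]
      rw [this, h2]; exact fs i hin
    · rw [hpg i (by omega), hpg (i + 1) (by omega)]
      have : i + 1 - n = (i - n) + 1 := by omega
      rw [this]
      exact gs (i - n) (by omega)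
  · apply Finset.sup'_le
    intro i hi
    simp only [Finset.mem_range] at hi
    by_cases hin : i ≤ n
    · have : p i = f i := by simp [hp, hin]
      rw [this]
      exact le_max_of_le_left (Finset.le_sup' (fun j => J (f j)) (by simp; omega))
    · rw [hpg i (by omega)]
      exact le_max_of_le_right (Finset.le_sup' (fun j => J (g j)) (by simp; omega))

lemma elevation_triangle (hconn : ∀ a b : E, ∃ n f, IsPath S a b n f) (x y z : E) :
    elevation S J x z ≤ max (elevation S J x y) (elevation S J y z) := by
  obtain ⟨c, hc, hle⟩ := concat_mem S J (elevation_mem S J hconn x y) (elevation_mem S J hconn y z)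
  exact (elevation_le S J hc).trans hle

end MstarAux

/-- If `x*` is a global minimum of `J`, then `m* = max_{y} (H_{x*,y} - J y)`. -/
theorem mstar_eq_sup_from_min
    {E : Type*} [Fintype E] [Nonempty E] (S : E → E → Prop)
    (hsym : ∀ a b, S a b → S b a)
    (hconn : ∀ a b : E, ∃ (n : ℕ) (f : ℕ → E), IsPath S a b n f)
    (J : E → ℝ) (xstar : E)
    (hxstar : J xstar = Finset.univ.inf' Finset.univ_nonempty J) :
    mstar S J =
      Finset.univ.sup' Finset.univ_nonempty (fun y => elevation S J xstar y - J y) := by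
  have hmin : ∀ u : E, J xstar ≤ J u := fun u => by
    rw [hxstar]; exact Finset.inf'_le _ (Finset.mem_univ u)
  apply le_antisymm
  · apply Finset.sup'_le; intro x _
    apply Finset.sup'_le; intro y _
    have htri := MstarAux.elevation_triangle S J hconn x xstar y
    have hsymm := MstarAux.elevation_symm S J hsym hconn x xstar
    have h1 : elevation S J xstar x - J x ≤
        Finset.univ.sup' Finset.univ_nonempty (fun z => elevation S J xstar z - J z) :=
      Finset.le_sup' (fun z => elevation S J xstar z - J z) (Finset.mem_univ x)
    have h2 : elevation S J xstar y - J y ≤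
        Finset.univ.sup' Finset.univ_nonempty (fun z => elevation S J xstar z - J z) :=
      Finset.le_sup' (fun z => elevation S J xstar z - J z) (Finset.mem_univ y)
    rcases max_cases (elevation S J x xstar) (elevation S J xstar y) with ⟨he, _⟩ | ⟨he, _⟩
    · have : elevation S J x y - max (J x) (J y) ≤ elevation S J xstar x - J x := by
        rw [← hsymm]
        have := le_max_left (J x) (J y)
        linarith [htri.trans_eq he]
      linarith
    · have : elevation S J x y - max (J x) (J y) ≤ elevation S J xstar y - J y := by
        have := le_max_right (J x) (J y)
        linarith [htri.trans_eq he]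
      linarith
  · apply Finset.sup'_le; intro y _
    have hmax : max (J xstar) (J y) = J y := max_eq_right (hmin y)
    have : elevation S J xstar y - max (J xstar) (J y) ≤
        Finset.univ.sup' Finset.univ_nonempty (fun z => elevation S J xstar z - max (J xstar) (J z)) :=
      Finset.le_sup' (fun z => elevation S J xstar z - max (J xstar) (J z)) (Finset.mem_univ y)
    rw [hmax] at this
    exact this.trans (Finset.le_sup' (fun x => Finset.univ.sup' Finset.univ_nonempty
      fun z => elevation S J x z - max (J x) (J z)) (Finset.mem_univ xstar))
end

section
/- Let 0 < δ1 < δ2 < 1, A > 0, B > 0, d > 0 and u0 ≥ 0. Define A_t = A d (1+td)^{−δ1}, and let B_t be a nonnegative locally integrable function with B_t ≤ B d (1+td)^{−δ2} for all t ≥ 0. Then there exist Γ > 0 and T0 ≥ 0 such that for all t ≥ T0, u0 · exp(∫_0^t (−A_s + B_s) ds) + ∫_0^t B_s · exp(∫_s^t (−A_h + B_h) dh) ds ≤ Γ (1+t)^{δ1 − δ2}. -/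
open MeasureTheory intervalIntegral

private lemma grw_contOn (c δ d : ℝ) {s : Set ℝ} (hs : ∀ x ∈ s, 0 < 1 + x * d) :
    ContinuousOn (fun x : ℝ => c * d * (1 + x * d) ^ (-δ)) s := by
  intro x hx
  have h1 : ContinuousAt (fun x : ℝ => 1 + x * d) x := by fun_prop
  exact (continuousAt_const.mul (h1.rpow_const (Or.inl (hs x hx).ne'))).continuousWithinAt

private lemma grw_mem_nonneg {a b x : ℝ} (ha : 0 ≤ a) (hb : 0 ≤ b) (hx : x ∈ Set.uIcc a b) :
    0 ≤ x := le_trans (le_min ha hb) hx.1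

private lemma grw_intble (c δ : ℝ) {d : ℝ} (hd : 0 < d) {a b : ℝ} (ha : 0 ≤ a) (hb : 0 ≤ b) :
    IntervalIntegrable (fun x : ℝ => c * d * (1 + x * d) ^ (-δ)) volume a b := by
  refine (grw_contOn c δ d (fun x hx => ?_)).intervalIntegrable
  nlinarith [grw_mem_nonneg ha hb hx]

private lemma grw_integral (c δ : ℝ) {d : ℝ} (hd : 0 < d) (hδ : δ < 1) {a b : ℝ}
    (ha : 0 ≤ a) (hb : 0 ≤ b) :
    ∫ s in a..b, c * d * (1 + s * d) ^ (-δ)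
      = c / (1 - δ) * ((1 + b * d) ^ (1 - δ) - (1 + a * d) ^ (1 - δ)) := by
  have hδ0 : (1:ℝ) - δ ≠ 0 := by linarith
  have h := intervalIntegral.integral_eq_sub_of_hasDerivAt
    (f := fun s : ℝ => c / (1 - δ) * (1 + s * d) ^ (1 - δ))
    (f' := fun s : ℝ => c * d * (1 + s * d) ^ (-δ)) (a := a) (b := b)
    ?_ (grw_intble c δ hd ha hb)
  · rw [h]; ring
  · intro x hx
    have hpos : 0 < 1 + x * d := by nlinarith [grw_mem_nonneg ha hb hx]
    have h1 : HasDerivAt (fun s : ℝ => 1 + s * d) d x := by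
      simpa using ((hasDerivAt_id x).mul_const d).const_add 1
    have h2 := (h1.rpow_const (p := 1 - δ) (Or.inl hpos.ne')).const_mul (c / (1 - δ))
    refine h2.congr_deriv ?_
    rw [show (1:ℝ) - δ - 1 = -δ by ring]
    field_simp

private lemma grw_thresh {c e x : ℝ} (he : 0 < e) (hx : max 1 (c ^ (1/e)) ≤ x) : c ≤ x ^ e := by
  have hx1 : (1:ℝ) ≤ x := le_trans (le_max_left _ _) hx
  rcases le_or_gt c 1 with h | h
  · exact h.trans (Real.one_le_rpow hx1 he.le)
  · have h2 : c ^ (1/e) ≤ x := le_trans (le_max_right _ _) hx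
    have h3 : (c ^ (1/e)) ^ e ≤ x ^ e :=
      Real.rpow_le_rpow (Real.rpow_nonneg (by linarith) _) h2 he.le
    rwa [← Real.rpow_mul (by linarith : (0:ℝ) ≤ c), one_div,
      inv_mul_cancel₀ he.ne', Real.rpow_one] at h3

private lemma grw_exp_neg_le {y : ℝ} (hy : 0 < y) : Real.exp (-y) ≤ y⁻¹ := by
  rw [Real.exp_neg]
  exact inv_anti₀ hy (by linarith [Real.add_one_le_exp y])

set_option maxHeartbeats 4000000 in
/-- Integrated Grönwall bound: if `A_t = A d (1+td)^{-δ₁}` and `B` is a nonnegative locally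
integrable function with `B_t ≤ B₀ d (1+td)^{-δ₂}` on `[0,∞)`, where `0 < δ₁ < δ₂ < 1`,
then the quantity `u₀ e^{∫₀ᵗ (-A_s + B_s) ds} + ∫₀ᵗ B_s e^{∫_sᵗ (-A_h + B_h) dh} ds` is
eventually bounded by `Γ (1+t)^{δ₁ - δ₂}`. -/
theorem gronwall_bound_general
    (δ1 δ2 A B0 d u0 : ℝ)
    (hδ1 : 0 < δ1) (hδ12 : δ1 < δ2) (hδ2 : δ2 < 1)
    (hA : 0 < A) (hB0 : 0 < B0) (hd : 0 < d) (hu0 : 0 ≤ u0)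
    (Bf : ℝ → ℝ)
    (hB_nonneg : ∀ t ≥ (0:ℝ), 0 ≤ Bf t)
    (hB_loc : LocallyIntegrableOn Bf (Set.Ici (0:ℝ)) volume)
    (hB_le : ∀ t ≥ (0:ℝ), Bf t ≤ B0 * d * (1 + t * d) ^ (-δ2)) :
    ∃ (Γ T0 : ℝ), 0 < Γ ∧ 0 ≤ T0 ∧ ∀ t ≥ T0,
      u0 * Real.exp (∫ s in (0:ℝ)..t, (-(A * d * (1 + s * d) ^ (-δ1)) + Bf s)) +
        (∫ s in (0:ℝ)..t,
          Bf s * Real.exp (∫ h in s..t, (-(A * d * (1 + h * d) ^ (-δ1)) + Bf h))) ≤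
      Γ * (1 + t) ^ (δ1 - δ2) := by
  have hβ1 : 0 < 1 - δ1 := by linarith
  have hβ2 : 0 < 1 - δ2 := by linarith
  have he : 0 < δ2 - δ1 := by linarith
  set K : ℝ := max 1 ((2 * B0 / A) ^ ((1:ℝ)/(δ2 - δ1))) with hK_def
  set R : ℝ := max 1 ((32 * B0 / (A * (1 - δ2))) ^ ((1:ℝ)/(δ2 - δ1))) with hR_def
  set m : ℝ := min 1 d with hm_def
  set m2 : ℝ := min 1 (d / 2) with hm2_def
  have hm0 : 0 < m := lt_min one_pos hd
  have hm20 : 0 < m2 := lt_min one_pos (by linarith)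
  have hK1 : (1:ℝ) ≤ K := le_max_left _ _
  have hR1 : (1:ℝ) ≤ R := le_max_left _ _
  set M2 : ℝ := B0 * K + A / (2 * (1 - δ1)) * (1 + K) ^ (1 - δ1) with hM2_def
  set C1 : ℝ := u0 * Real.exp M2 * 2 / A + 64 * B0 / (A * (1 - δ2)) with hC1_def
  refine ⟨C1 * m ^ (δ1 - δ2) + (2 * B0 / A) * m2 ^ (δ1 - δ2), max (2 * K / d) (R / d),
    ?_, ?_, ?_⟩
  · have h1 : 0 < 64 * B0 / (A * (1 - δ2)) := by positivity
    have h2 : 0 ≤ u0 * Real.exp M2 * 2 / A :=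
      div_nonneg (mul_nonneg (mul_nonneg hu0 (Real.exp_pos M2).le) (by norm_num)) hA.le
    have hC1 : 0 < C1 := by rw [hC1_def]; linarith
    have h3 : 0 < m ^ (δ1 - δ2) := Real.rpow_pos_of_pos hm0 _
    have h4 : 0 < m2 ^ (δ1 - δ2) := Real.rpow_pos_of_pos hm20 _
    have h5 : 0 < 2 * B0 / A := by positivity
    exact add_pos (mul_pos hC1 h3) (mul_pos h5 h4)
  · exact le_trans (div_nonneg (by linarith) hd.le) (le_max_left _ _)
  intro t ht

  have htK : 2 * K / d ≤ t := le_trans (le_max_left _ _) ht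
  have htR : R / d ≤ t := le_trans (le_max_right _ _) ht
  have h2Ktd : 2 * K ≤ t * d := by rw [div_le_iff₀ hd] at htK; linarith
  have hRtd : R ≤ t * d := by rw [div_le_iff₀ hd] at htR; linarith
  have htd1 : 1 ≤ t * d := le_trans hR1 hRtd
  have htd0 : (0:ℝ) < t * d := by linarith
  have ht0 : 0 < t := by nlinarith
  have hht : (0:ℝ) ≤ t / 2 := by linarith
  have hhalf_le : t / 2 ≤ t := by linarith
  have hKhalf : K ≤ t / 2 * d := by nlinarith
  set fA : ℝ → ℝ := fun s => A * d * (1 + s * d) ^ (-δ1) with hfA_def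
  set fB : ℝ → ℝ := fun s => B0 * d * (1 + s * d) ^ (-δ2) with hfB_def
  set f : ℝ → ℝ := fun s => -fA s + fB s with hf_def
  set F : ℝ → ℝ := fun s => ∫ x in (0:ℝ)..s, f x with hF_def
  -- integrability
  have hint_fA : ∀ a b : ℝ, 0 ≤ a → 0 ≤ b → IntervalIntegrable fA volume a b :=
    fun a b ha hb => grw_intble A δ1 hd ha hb
  have hint_fB : ∀ a b : ℝ, 0 ≤ a → 0 ≤ b → IntervalIntegrable fB volume a b :=
    fun a b ha hb => grw_intble B0 δ2 hd ha hb
  have hint_f : ∀ a b : ℝ, 0 ≤ a → 0 ≤ b → IntervalIntegrable f volume a b :=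
    fun a b ha hb => ((hint_fA a b ha hb).neg).add (hint_fB a b ha hb)
  have hint_Bf : ∀ a b : ℝ, 0 ≤ a → 0 ≤ b → IntervalIntegrable Bf volume a b := by
    intro a b ha hb
    rw [intervalIntegrable_iff]
    exact (hB_loc.integrableOn_compact_subset
      (fun x hx => grw_mem_nonneg ha hb hx) isCompact_uIcc).mono_set Set.uIoc_subset_uIcc
  have hint_g : ∀ a b : ℝ, 0 ≤ a → 0 ≤ b →
      IntervalIntegrable (fun s => -fA s + Bf s) volume a b :=
    fun a b ha hb => ((hint_fA a b ha hb).neg).add (hint_Bf a b ha hb)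
  -- pointwise facts
  have hpos1 : ∀ s : ℝ, 0 ≤ s → (0:ℝ) < 1 + s * d := fun s hs => by nlinarith
  have hfA_pos : ∀ s : ℝ, 0 ≤ s → 0 < fA s := fun s hs => by
    rw [hfA_def]
    exact mul_pos (by positivity) (Real.rpow_pos_of_pos (hpos1 s hs) _)
  have hfB_pos : ∀ s : ℝ, 0 ≤ s → 0 < fB s := fun s hs => by
    rw [hfB_def]
    exact mul_pos (by positivity) (Real.rpow_pos_of_pos (hpos1 s hs) _)
  have hf_le_fB : ∀ s : ℝ, 0 ≤ s → f s ≤ fB s := fun s hs => by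
    have := hfA_pos s hs
    rw [hf_def]; dsimp only; linarith
  have hBf_le : ∀ s : ℝ, 0 ≤ s → Bf s ≤ fB s := fun s hs => hB_le s hs
  have hhalfB : ∀ s : ℝ, K ≤ s * d → fB s ≤ fA s / 2 := by
    intro s hs
    have hs0 : 0 ≤ s := by nlinarith
    have hpos : (0:ℝ) < 1 + s * d := hpos1 s hs0
    have hKle : max 1 ((2 * B0 / A) ^ ((1:ℝ)/(δ2 - δ1))) ≤ 1 + s * d := by
      rw [← hK_def]; linarith
    have hth : 2 * B0 / A ≤ (1 + s * d) ^ (δ2 - δ1) := grw_thresh he hKle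
    have hX : (1 + s * d) ^ (δ2 - δ1) * (1 + s * d) ^ (-δ2) = (1 + s * d) ^ (-δ1) := by
      rw [← Real.rpow_add hpos]; ring_nf
    have h2 : 2 * B0 ≤ A * (1 + s * d) ^ (δ2 - δ1) := by
      rw [div_le_iff₀ hA] at hth; linarith
    have h3 : 0 < (1 + s * d) ^ (-δ2) := Real.rpow_pos_of_pos hpos _
    rw [hfB_def, hfA_def]; dsimp only
    calc B0 * d * (1 + s * d) ^ (-δ2) = 2 * B0 * (1 + s * d) ^ (-δ2) * d / 2 := by ring
    _ ≤ A * (1 + s * d) ^ (δ2 - δ1) * (1 + s * d) ^ (-δ2) * d / 2 := by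
        have h4 := mul_le_mul_of_nonneg_right
          (mul_le_mul_of_nonneg_right h2 h3.le) hd.le
        linarith
    _ = A * d * ((1 + s * d) ^ (δ2 - δ1) * (1 + s * d) ^ (-δ2)) / 2 := by ring
    _ = A * d * (1 + s * d) ^ (-δ1) / 2 := by rw [hX]
  have hhalf_f : ∀ s : ℝ, K ≤ s * d → f s ≤ -(fA s) / 2 := fun s hs => by
    have := hhalfB s hs
    rw [hf_def]; dsimp only; linarith
  -- F facts
  have hFsub : ∀ a b : ℝ, 0 ≤ a → 0 ≤ b → F b - F a = ∫ x in a..b, f x := fun a b ha hb =>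
    intervalIntegral.integral_interval_sub_left (hint_f 0 b le_rfl hb) (hint_f 0 a le_rfl ha)
  have hcomp : ∀ s : ℝ, 0 ≤ s → s ≤ t →
      (∫ h in s..t, (-fA h + Bf h)) ≤ F t - F s := by
    intro s hs hst
    rw [hFsub s t hs ht0.le]
    refine intervalIntegral.integral_mono_on hst (hint_g s t hs ht0.le)
      (hint_f s t hs ht0.le) ?_
    intro x hx
    have hx0 : 0 ≤ x := le_trans hs hx.1
    have h1 := hBf_le x hx0
    rw [hf_def]; dsimp only; linarith

  -- continuity facts
  have hsubset0t : ∀ x ∈ Set.uIcc (0:ℝ) t, 0 < 1 + x * d :=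
    fun x hx => hpos1 x (grw_mem_nonneg le_rfl ht0.le hx)
  have hcont_fA : ContinuousOn fA (Set.uIcc (0:ℝ) t) := by
    rw [hfA_def]; exact grw_contOn A δ1 d hsubset0t
  have hcont_fB : ContinuousOn fB (Set.uIcc (0:ℝ) t) := by
    rw [hfB_def]; exact grw_contOn B0 δ2 d hsubset0t
  have hcont_f : ContinuousOn f (Set.uIcc (0:ℝ) t) := by
    rw [hf_def]; exact hcont_fA.neg.add hcont_fB
  have hcontF : ContinuousOn F (Set.uIcc (0:ℝ) t) := by
    rw [hF_def]
    exact intervalIntegral.continuousOn_primitive_interval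
      (hcont_f.integrableOn_compact isCompact_uIcc)
  have hcontE : ContinuousOn (fun s => Real.exp (F t - F s)) (Set.uIcc (0:ℝ) t) :=
    Real.continuous_exp.comp_continuousOn (continuousOn_const.sub hcontF)
  -- derivative of F
  have hopen : IsOpen {y : ℝ | 0 < 1 + y * d} := by
    have : {y : ℝ | 0 < 1 + y * d} = Set.Ioi (-(1/d)) := by
      ext y
      simp only [Set.mem_setOf_eq, Set.mem_Ioi]
      constructor
      · intro h
        by_contra hc
        push_neg at hc
        have h2 := mul_le_mul_of_nonneg_right hc hd.le
        rw [neg_mul, one_div, inv_mul_cancel₀ hd.ne'] at h2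
        linarith
      · intro h
        have h2 := mul_lt_mul_of_pos_right h hd
        rw [neg_mul, one_div, inv_mul_cancel₀ hd.ne'] at h2
        linarith
    rw [this]; exact isOpen_Ioi
  have hcont_f' : ContinuousOn f {y : ℝ | 0 < 1 + y * d} := by
    rw [hf_def]
    exact (grw_contOn A δ1 d (fun x hx => hx)).neg.add (grw_contOn B0 δ2 d (fun x hx => hx))
  have hFderiv : ∀ x : ℝ, 0 ≤ x → HasDerivAt F (f x) x := by
    intro x hx
    have hpos : x ∈ {y : ℝ | 0 < 1 + y * d} := hpos1 x hx
    rw [hF_def]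
    exact intervalIntegral.integral_hasDerivAt_right (hint_f 0 x le_rfl hx)
      (hcont_f'.stronglyMeasurableAtFilter hopen x hpos)
      (hcont_f'.continuousAt (hopen.mem_nhds hpos))
  -- FTC identity
  have hFTC : ∀ a : ℝ, 0 ≤ a → a ≤ t →
      (∫ s in a..t, (fA s - fB s) * Real.exp (F t - F s)) = 1 - Real.exp (F t - F a) := by
    intro a ha hat
    have husub : Set.uIcc a t ⊆ Set.uIcc (0:ℝ) t := by
      rw [Set.uIcc_of_le hat, Set.uIcc_of_le ht0.le]
      exact Set.Icc_subset_Icc ha le_rfl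
    have key : ∀ x ∈ Set.uIcc a t, HasDerivAt (fun s => Real.exp (F t - F s))
        ((fA x - fB x) * Real.exp (F t - F x)) x := by
      intro x hx
      have hx0 : 0 ≤ x := grw_mem_nonneg ha ht0.le hx
      have h1 : HasDerivAt (fun s => F t - F s) (-(f x)) x :=
        (hFderiv x hx0).const_sub (F t)
      have h2 := h1.exp
      convert h2 using 1
      rw [hf_def]; dsimp only; ring
    have hint : IntervalIntegrable (fun s => (fA s - fB s) * Real.exp (F t - F s))
        volume a t :=
      (((hcont_fA.sub hcont_fB).mono husub).mul (hcontE.mono husub)).intervalIntegrable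
    rw [intervalIntegral.integral_eq_sub_of_hasDerivAt key hint, sub_self, Real.exp_zero]

  -- basic positivity
  have hpos_t : (0:ℝ) < 1 + t * d := hpos1 t ht0.le
  have hpos_half : (0:ℝ) < 1 + t/2 * d := hpos1 _ hht
  have hKx_half : ∀ x : ℝ, t/2 ≤ x → K ≤ x * d := fun x hx => le_trans hKhalf (by nlinarith)
  have hX1 : 0 < (t*d)^(1-δ1) := Real.rpow_pos_of_pos htd0 _
  have hfBnn : ∀ x : ℝ, 0 ≤ x → 0 ≤ fB x := fun x hx => (hfB_pos x hx).le
  -- decay of F on [t/2, t]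
  have hFhalf : F t - F (t/2) ≤ -(A/8) * (t*d)^(1-δ1) := by
    rw [hFsub (t/2) t hht ht0.le]
    have step1 : (∫ x in (t/2)..t, f x) ≤ ∫ x in (t/2)..t, (-(A/2)) * d * (1+x*d)^(-δ1) := by
      refine intervalIntegral.integral_mono_on hhalf_le (hint_f _ _ hht ht0.le)
        (grw_intble _ _ hd hht ht0.le) ?_
      intro x hx
      have h1 := hhalf_f x (hKx_half x hx.1)
      simp only [hfA_def] at h1
      linarith
    rw [grw_integral _ _ hd (by linarith : δ1 < 1) hht ht0.le] at step1
    have step3 : (1-δ1) * d * (t/2) * (1+t*d)^(-δ1)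
        ≤ (1+t*d)^(1-δ1) - (1+t/2*d)^(1-δ1) := by
      have e1 := grw_integral (1-δ1) δ1 hd (by linarith : δ1 < 1) hht ht0.le
      have e2 : (∫ x in (t/2)..t, (1-δ1) * d * (1+t*d)^(-δ1)) ≤
          ∫ x in (t/2)..t, (1-δ1) * d * (1+x*d)^(-δ1) := by
        refine intervalIntegral.integral_mono_on hhalf_le intervalIntegrable_const
          (grw_intble _ _ hd hht ht0.le) ?_
        intro x hx
        have hxpos := hpos1 x (le_trans hht hx.1)
        have h3 : (1+t*d)^(-δ1) ≤ (1+x*d)^(-δ1) :=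
          Real.rpow_le_rpow_of_nonpos hxpos (by nlinarith [hx.2]) (by linarith)
        exact mul_le_mul_of_nonneg_left h3 (mul_nonneg hβ1.le hd.le)
      rw [e1, intervalIntegral.integral_const, smul_eq_mul, div_self hβ1.ne', one_mul] at e2
      calc (1-δ1) * d * (t/2) * (1+t*d)^(-δ1)
          = (t - t/2) * ((1-δ1) * d * (1+t*d)^(-δ1)) := by ring
      _ ≤ _ := e2
    have step4 : (1/4 : ℝ) * (t*d)^(1-δ1) ≤ d * (t/2) * (1+t*d)^(-δ1) := by
      have e3 : (2*(t*d))^(-δ1) ≤ (1+t*d)^(-δ1) :=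
        Real.rpow_le_rpow_of_nonpos hpos_t (by linarith) (by linarith)
      have e4 : (2*(t*d))^(-δ1) = 2^(-δ1) * (t*d)^(-δ1) := Real.mul_rpow (by norm_num) htd0.le
      have e5 : (1/2 : ℝ) ≤ 2^(-δ1) := by
        have h := Real.rpow_le_rpow_of_exponent_le (by norm_num : (1:ℝ) ≤ 2)
          (by linarith : (-1:ℝ) ≤ -δ1)
        rw [Real.rpow_neg_one] at h
        linarith [h]
      have e6 : (t*d)^(1-δ1) = (t*d) * (t*d)^(-δ1) := by
        have h := Real.rpow_add htd0 1 (-δ1)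
        rw [Real.rpow_one] at h
        rw [show (1:ℝ)-δ1 = 1 + -δ1 by ring, h]
      have h7 : 0 ≤ (t*d)^(-δ1) := Real.rpow_nonneg htd0.le _
      have h9 : (1/4 : ℝ) * (t*d)^(1-δ1) ≤ (t*d/2) * (2*(t*d))^(-δ1) := by
        rw [e4, e6]
        have h10 := mul_le_mul_of_nonneg_right e5 h7
        have h11 := mul_le_mul_of_nonneg_left h10 (by linarith : (0:ℝ) ≤ t*d/2)
        calc (1/4 : ℝ) * ((t*d) * (t*d)^(-δ1)) = (t*d/2) * ((1/2) * (t*d)^(-δ1)) := by ring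
        _ ≤ _ := h11
      have h8 : (t*d/2) * (2*(t*d))^(-δ1) ≤ d*(t/2) * (1+t*d)^(-δ1) := by
        calc (t*d/2) * (2*(t*d))^(-δ1) ≤ (t*d/2) * (1+t*d)^(-δ1) :=
          mul_le_mul_of_nonneg_left e3 (by linarith : (0:ℝ) ≤ t*d/2)
        _ = d*(t/2) * (1+t*d)^(-δ1) := by ring
      linarith
    have hBr : (1-δ1)/4 * (t*d)^(1-δ1) ≤ (1+t*d)^(1-δ1) - (1+t/2*d)^(1-δ1) := by
      have h12 := mul_le_mul_of_nonneg_left step4 hβ1.le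
      nlinarith [h12, step3]
    have h13 := mul_le_mul_of_nonneg_left hBr (le_of_lt (div_pos (by linarith : (0:ℝ) < A/2) hβ1))
    have h14 : A/2/(1-δ1) * ((1-δ1)/4 * (t*d)^(1-δ1)) = A/8 * (t*d)^(1-δ1) := by
      field_simp
      ring
    have h15 : A/8 * (t*d)^(1-δ1)
        ≤ A/2/(1-δ1) * ((1+t*d)^(1-δ1) - (1+t/2*d)^(1-δ1)) := by
      rw [← h14]; exact h13
    have h16 : (-(A/2))/(1-δ1) * ((1+t*d)^(1-δ1) - (1+t/2*d)^(1-δ1))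
        = -(A/2/(1-δ1) * ((1+t*d)^(1-δ1) - (1+t/2*d)^(1-δ1))) := by ring
    rw [h16] at step1
    linarith [step1, h15]
  -- bound on the integral of fB over [0, t/2]
  have hQ : (∫ s in (0:ℝ)..(t/2), fB s) ≤ 2*B0/(1-δ2) * (t*d)^(1-δ2) := by
    simp only [hfB_def]
    rw [grw_integral B0 δ2 hd hδ2 le_rfl hht]
    have e0 : ((1:ℝ) + 0 * d) ^ (1-δ2) = 1 := by norm_num
    rw [e0]
    have e1 : (1+t/2*d)^(1-δ2) ≤ (2*(t*d))^(1-δ2) :=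
      Real.rpow_le_rpow (by linarith) (by nlinarith) hβ2.le
    have e2 : (2*(t*d))^(1-δ2) = 2^(1-δ2) * (t*d)^(1-δ2) := Real.mul_rpow (by norm_num) htd0.le
    have e3 : 0 ≤ (t*d)^(1-δ2) := Real.rpow_nonneg htd0.le _
    have htwo : (2:ℝ)^(1-δ2) ≤ 2 := by
      have h := Real.rpow_le_rpow_of_exponent_le (by norm_num : (1:ℝ) ≤ 2)
        (by linarith : 1-δ2 ≤ 1)
      rwa [Real.rpow_one] at h
    have e4 : (1+t/2*d)^(1-δ2) ≤ 2 * (t*d)^(1-δ2) := by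
      rw [e2] at e1
      nlinarith [mul_le_mul_of_nonneg_right htwo e3]
    have e5 : 0 < B0/(1-δ2) := div_pos hB0 hβ2
    have e6 := mul_le_mul_of_nonneg_left
      (by linarith : (1+t/2*d)^(1-δ2) - 1 ≤ 2*(t*d)^(1-δ2)) e5.le
    calc B0/(1-δ2) * ((1+t/2*d)^(1-δ2) - 1) ≤ B0/(1-δ2) * (2*(t*d)^(1-δ2)) := e6
    _ = 2*B0/(1-δ2) * (t*d)^(1-δ2) := by ring
  have hQs : ∀ s : ℝ, 0 ≤ s → s ≤ t/2 →
      (∫ x in s..(t/2), fB x) ≤ 2*B0/(1-δ2) * (t*d)^(1-δ2) := by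
    intro s hs hs2
    have h1 : (∫ x in s..(t/2), fB x)
        = (∫ x in (0:ℝ)..(t/2), fB x) - ∫ x in (0:ℝ)..s, fB x :=
      (intervalIntegral.integral_interval_sub_left (hint_fB 0 (t/2) le_rfl hht)
        (hint_fB 0 s le_rfl hs)).symm
    have h2 : 0 ≤ ∫ x in (0:ℝ)..s, fB x :=
      intervalIntegral.integral_nonneg hs (fun u hu => hfBnn u hu.1)
    linarith [hQ]
  have hc3 : 2*B0/(1-δ2) * (t*d)^(1-δ2) ≤ A/16 * (t*d)^(1-δ1) := by
    have hth : 32*B0/(A*(1-δ2)) ≤ (t*d)^(δ2-δ1) :=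
      grw_thresh he (by rw [← hR_def]; exact hRtd)
    have hsplit : (t*d)^(1-δ1) = (t*d)^(δ2-δ1) * (t*d)^(1-δ2) := by
      rw [← Real.rpow_add htd0]; ring_nf
    have h1 : 0 ≤ (t*d)^(1-δ2) := Real.rpow_nonneg htd0.le _
    have h2 := mul_le_mul_of_nonneg_right hth h1
    have h3 := mul_le_mul_of_nonneg_left h2 (by linarith : (0:ℝ) ≤ A/16)
    rw [hsplit]
    have h4 : 2*B0/(1-δ2)*(t*d)^(1-δ2) = A/16 * (32*B0/(A*(1-δ2)) * (t*d)^(1-δ2)) := by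
      field_simp
      ring
    rw [h4]
    exact h3
  have hEbound : ∀ s : ℝ, 0 ≤ s → s ≤ t/2 →
      Real.exp (F t - F s) ≤ 16/A * (t*d)^(-(1-δ1)) := by
    intro s hs hs2
    have h1 : F (t/2) - F s ≤ 2*B0/(1-δ2) * (t*d)^(1-δ2) := by
      rw [hFsub s (t/2) hs hht]
      exact le_trans (intervalIntegral.integral_mono_on hs2 (hint_f s (t/2) hs hht)
        (hint_fB s (t/2) hs hht) (fun x hx => hf_le_fB x (le_trans hs hx.1)))
        (hQs s hs hs2)
    have h2 : F t - F s ≤ -(A/16 * (t*d)^(1-δ1)) := by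
      have h3 : F t - F s = (F t - F (t/2)) + (F (t/2) - F s) := by ring
      rw [h3]
      calc (F t - F (t/2)) + (F (t/2) - F s)
          ≤ -(A/8)*(t*d)^(1-δ1) + 2*B0/(1-δ2)*(t*d)^(1-δ2) := by linarith [hFhalf]
      _ ≤ -(A/8)*(t*d)^(1-δ1) + A/16*(t*d)^(1-δ1) := by linarith [hc3]
      _ = -(A/16 * (t*d)^(1-δ1)) := by ring
    have h4 : Real.exp (F t - F s) ≤ Real.exp (-(A/16 * (t*d)^(1-δ1))) :=
      Real.exp_le_exp.mpr h2
    have h5 : 0 < A/16 * (t*d)^(1-δ1) := mul_pos (by linarith) hX1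
    have h7 : (A/16 * (t*d)^(1-δ1))⁻¹ = 16/A * (t*d)^(-(1-δ1)) := by
      rw [Real.rpow_neg htd0.le, mul_inv, inv_div]
    calc Real.exp (F t - F s) ≤ _ := h4
    _ ≤ (A/16 * (t*d)^(1-δ1))⁻¹ := grw_exp_neg_le h5
    _ = _ := h7
  -- the two halves of the main integral
  have husub1 : Set.uIcc (0:ℝ) (t/2) ⊆ Set.uIcc (0:ℝ) t := by
    rw [Set.uIcc_of_le hht, Set.uIcc_of_le ht0.le]
    exact Set.Icc_subset_Icc le_rfl hhalf_le
  have husub2 : Set.uIcc (t/2) t ⊆ Set.uIcc (0:ℝ) t := by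
    rw [Set.uIcc_of_le hhalf_le, Set.uIcc_of_le ht0.le]
    exact Set.Icc_subset_Icc hht le_rfl
  have hI1 : (∫ s in (0:ℝ)..(t/2), fB s * Real.exp (F t - F s))
      ≤ 32*B0/(A*(1-δ2)) * (t*d)^(δ1-δ2) := by
    have int1 : IntervalIntegrable (fun s => fB s * Real.exp (F t - F s)) volume 0 (t/2) :=
      ((hcont_fB.mono husub1).mul (hcontE.mono husub1)).intervalIntegrable
    have h1 : (∫ s in (0:ℝ)..(t/2), fB s * Real.exp (F t - F s))
        ≤ ∫ s in (0:ℝ)..(t/2), fB s * (16/A * (t*d)^(-(1-δ1))) := by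
      refine intervalIntegral.integral_mono_on hht int1
        ((hint_fB 0 (t/2) le_rfl hht).mul_const _) ?_
      intro x hx
      exact mul_le_mul_of_nonneg_left (hEbound x hx.1 hx.2) (hfBnn x hx.1)
    rw [intervalIntegral.integral_mul_const] at h1
    have h2 : 0 ≤ 16/A * (t*d)^(-(1-δ1)) :=
      mul_nonneg (by positivity) (Real.rpow_nonneg htd0.le _)
    have h3 := mul_le_mul_of_nonneg_right hQ h2
    have h4 : 2*B0/(1-δ2) * (t*d)^(1-δ2) * (16/A * (t*d)^(-(1-δ1)))
        = 32*B0/(A*(1-δ2)) * (t*d)^(δ1-δ2) := by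
      rw [show (δ1-δ2 : ℝ) = (1-δ2) + -(1-δ1) by ring, Real.rpow_add htd0]
      field_simp
      ring
    linarith
  have hI2 : (∫ s in (t/2)..t, fB s * Real.exp (F t - F s))
      ≤ 2*B0/A * (1+t/2*d)^(δ1-δ2) := by
    have int1 : IntervalIntegrable (fun s => fB s * Real.exp (F t - F s)) volume (t/2) t :=
      ((hcont_fB.mono husub2).mul (hcontE.mono husub2)).intervalIntegrable
    have int2 : IntervalIntegrable
        (fun s => 2*B0/A * (1+t/2*d)^(δ1-δ2) * ((fA s - fB s) * Real.exp (F t - F s)))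
        volume (t/2) t :=
      (continuousOn_const.mul (((hcont_fA.mono husub2).sub (hcont_fB.mono husub2)).mul
        (hcontE.mono husub2))).intervalIntegrable
    have hpt : ∀ x ∈ Set.Icc (t/2) t, fB x * Real.exp (F t - F x)
        ≤ 2*B0/A * (1+t/2*d)^(δ1-δ2) * ((fA x - fB x) * Real.exp (F t - F x)) := by
      intro x hx
      have hx0 : 0 ≤ x := le_trans hht hx.1
      have hxpos := hpos1 x hx0
      have hK' := hKx_half x hx.1
      have hhalf := hhalfB x hK'
      have hEpos : 0 < Real.exp (F t - F x) := Real.exp_pos _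
      have hid : fB x = 2*B0/A * (1+x*d)^(δ1-δ2) * (fA x / 2) := by
        simp only [hfB_def, hfA_def]
        rw [show (-δ2 : ℝ) = (δ1-δ2) + -δ1 by ring, Real.rpow_add hxpos]
        field_simp
      have hmon : (1+x*d)^(δ1-δ2) ≤ (1+t/2*d)^(δ1-δ2) :=
        Real.rpow_le_rpow_of_nonpos hpos_half (by nlinarith [hx.1]) (by linarith)
      have h5 : 0 ≤ (1+x*d)^(δ1-δ2) := Real.rpow_nonneg hxpos.le _
      have h6 : 0 ≤ fA x - fB x := by linarith [hfA_pos x hx0]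
      have hB0A : (0:ℝ) ≤ 2*B0/A := by positivity
      have h7 : fB x ≤ 2*B0/A * (1+x*d)^(δ1-δ2) * (fA x - fB x) := by
        conv_lhs => rw [hid]
        rw [mul_assoc, mul_assoc]
        refine mul_le_mul_of_nonneg_left ?_ hB0A
        exact mul_le_mul_of_nonneg_left (by linarith : fA x / 2 ≤ fA x - fB x) h5
      have h8 : 2*B0/A * (1+x*d)^(δ1-δ2) * (fA x - fB x)
          ≤ 2*B0/A * (1+t/2*d)^(δ1-δ2) * (fA x - fB x) :=
        mul_le_mul_of_nonneg_right (mul_le_mul_of_nonneg_left hmon hB0A) h6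
      have h9 := mul_le_mul_of_nonneg_right (le_trans h7 h8) hEpos.le
      calc fB x * Real.exp (F t - F x) ≤ _ := h9
      _ = _ := by ring
    have hstep := intervalIntegral.integral_mono_on hhalf_le int1 int2 hpt
    rw [intervalIntegral.integral_const_mul, hFTC (t/2) hht hhalf_le] at hstep
    have hc0 : 0 ≤ 2*B0/A * (1+t/2*d)^(δ1-δ2) :=
      mul_nonneg (by positivity) (Real.rpow_nonneg hpos_half.le _)
    have hexp : (0:ℝ) ≤ Real.exp (F t - F (t/2)) := (Real.exp_pos _).le
    have h10 : 2*B0/A * (1+t/2*d)^(δ1-δ2) * (1 - Real.exp (F t - F (t/2)))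
        ≤ 2*B0/A * (1+t/2*d)^(δ1-δ2) * 1 :=
      mul_le_mul_of_nonneg_left (by linarith) hc0
    rw [mul_one] at h10
    linarith [hstep, h10]
  -- bound on F t
  have hKd0 : (0:ℝ) ≤ K/d := div_nonneg (by linarith) hd.le
  have hKdt : K/d ≤ t := by rw [div_le_iff₀ hd]; linarith
  have hFt : F t ≤ M2 - A/2 * (1+t*d)^(1-δ1) := by
    have hsplit : F t = (∫ x in (0:ℝ)..(K/d), f x) + ∫ x in (K/d)..t, f x := by
      rw [hF_def]
      exact (intervalIntegral.integral_add_adjacent_intervals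
        (hint_f 0 (K/d) le_rfl hKd0) (hint_f (K/d) t hKd0 ht0.le)).symm
    have hp1 : (∫ x in (0:ℝ)..(K/d), f x) ≤ B0 * K := by
      have h1 : (∫ x in (0:ℝ)..(K/d), f x) ≤ ∫ x in (0:ℝ)..(K/d), B0 * d := by
        refine intervalIntegral.integral_mono_on hKd0 (hint_f _ _ le_rfl hKd0)
          intervalIntegrable_const ?_
        intro x hx
        have h2 := hf_le_fB x hx.1
        have h3 : fB x ≤ B0 * d := by
          simp only [hfB_def]
          have h4 : (1+x*d)^(-δ2) ≤ 1 :=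
            Real.rpow_le_one_of_one_le_of_nonpos (by nlinarith [hx.1]) (by linarith)
          calc B0 * d * (1+x*d)^(-δ2) ≤ B0 * d * 1 :=
            mul_le_mul_of_nonneg_left h4 (mul_pos hB0 hd).le
          _ = B0 * d := mul_one _
        linarith
      rw [intervalIntegral.integral_const, smul_eq_mul, sub_zero] at h1
      calc (∫ x in (0:ℝ)..(K/d), f x) ≤ K/d * (B0*d) := h1
      _ = B0 * K := by field_simp
    have hp2 : (∫ x in (K/d)..t, f x)
        ≤ A/(2*(1-δ1)) * (1+K)^(1-δ1) - A/(2*(1-δ1)) * (1+t*d)^(1-δ1) := by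
      have h1 : (∫ x in (K/d)..t, f x) ≤ ∫ x in (K/d)..t, (-(A/2)) * d * (1+x*d)^(-δ1) := by
        refine intervalIntegral.integral_mono_on hKdt (hint_f _ _ hKd0 ht0.le)
          (grw_intble _ _ hd hKd0 ht0.le) ?_
        intro x hx
        have hKx : K ≤ x * d := by
          have h2 := hx.1
          rw [div_le_iff₀ hd] at h2
          linarith
        have h3 := hhalf_f x hKx
        simp only [hfA_def] at h3
        linarith
      rw [grw_integral _ _ hd (by linarith : δ1 < 1) hKd0 ht0.le] at h1
      have hKd : 1 + K/d*d = 1 + K := by field_simp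
      rw [hKd] at h1
      calc (∫ x in (K/d)..t, f x) ≤ _ := h1
      _ = A/(2*(1-δ1)) * (1+K)^(1-δ1) - A/(2*(1-δ1)) * (1+t*d)^(1-δ1) := by
        field_simp
        ring
    have hp3 : A/2 * (1+t*d)^(1-δ1) ≤ A/(2*(1-δ1)) * (1+t*d)^(1-δ1) := by
      have h1 : A/2 ≤ A/(2*(1-δ1)) := by
        rw [div_le_div_iff₀ (by norm_num) (by nlinarith)]
        nlinarith
      exact mul_le_mul_of_nonneg_right h1 (Real.rpow_nonneg hpos_t.le _)
    rw [hsplit, hM2_def]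
    linarith
  have hterm1 : u0 * Real.exp (F t) ≤ u0 * Real.exp M2 * (2/A) * (1+t*d)^(-(1-δ1)) := by
    have h1 : Real.exp (F t) ≤ Real.exp M2 * Real.exp (-(A/2 * (1+t*d)^(1-δ1))) := by
      rw [← Real.exp_add]
      exact Real.exp_le_exp.mpr (by linarith [hFt])
    have hY : 0 < A/2 * (1+t*d)^(1-δ1) := mul_pos (by linarith) (Real.rpow_pos_of_pos hpos_t _)
    have h3 : (A/2 * (1+t*d)^(1-δ1))⁻¹ = 2/A * (1+t*d)^(-(1-δ1)) := by
      rw [Real.rpow_neg hpos_t.le, mul_inv, inv_div]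
    have h4 : Real.exp (F t) ≤ Real.exp M2 * (2/A * (1+t*d)^(-(1-δ1))) := by
      calc Real.exp (F t) ≤ _ := h1
      _ ≤ Real.exp M2 * (A/2*(1+t*d)^(1-δ1))⁻¹ :=
        mul_le_mul_of_nonneg_left (grw_exp_neg_le hY) (Real.exp_pos M2).le
      _ = _ := by rw [h3]
    calc u0 * Real.exp (F t) ≤ u0 * (Real.exp M2 * (2/A * (1+t*d)^(-(1-δ1)))) :=
      mul_le_mul_of_nonneg_left h4 hu0
    _ = u0 * Real.exp M2 * (2/A) * (1+t*d)^(-(1-δ1)) := by ring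
  -- base change to (1+t)
  have h1t : (0:ℝ) < 1 + t := by linarith
  have hbase0 : (1+t*d)^(-(1-δ1)) ≤ (1+t*d)^(δ1-δ2) :=
    Real.rpow_le_rpow_of_exponent_le (by linarith) (by linarith)
  have hbase1 : (1+t*d)^(δ1-δ2) ≤ m^(δ1-δ2) * (1+t)^(δ1-δ2) := by
    have h1 : m * (1+t) ≤ 1 + t*d := by
      have hm1 : m ≤ 1 := min_le_left _ _
      have hmd : m ≤ d := min_le_right _ _
      nlinarith
    have h2 : 0 < m * (1+t) := mul_pos hm0 h1t
    have h3 := Real.rpow_le_rpow_of_nonpos h2 h1 (by linarith : δ1-δ2 ≤ 0)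
    rwa [Real.mul_rpow hm0.le h1t.le] at h3
  have hbase2 : (1+t/2*d)^(δ1-δ2) ≤ m2^(δ1-δ2) * (1+t)^(δ1-δ2) := by
    have h1 : m2 * (1+t) ≤ 1 + t/2*d := by
      have hm1 : m2 ≤ 1 := min_le_left _ _
      have hmd : m2 ≤ d/2 := min_le_right _ _
      nlinarith
    have h2 : 0 < m2 * (1+t) := mul_pos hm20 h1t
    have h3 := Real.rpow_le_rpow_of_nonpos h2 h1 (by linarith : δ1-δ2 ≤ 0)
    rwa [Real.mul_rpow hm20.le h1t.le] at h3
  have hbase3 : (t*d)^(δ1-δ2) ≤ 2 * (m^(δ1-δ2) * (1+t)^(δ1-δ2)) := by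
    have h1 : (1+t*d)/2 ≤ t*d := by linarith
    have h2 : (0:ℝ) < (1+t*d)/2 := by linarith
    have h3 : (t*d)^(δ1-δ2) ≤ ((1+t*d)/2)^(δ1-δ2) :=
      Real.rpow_le_rpow_of_nonpos h2 h1 (by linarith)
    have h4 : ((1+t*d)/2)^(δ1-δ2) = (1+t*d)^(δ1-δ2) * (1/2)^(δ1-δ2) := by
      rw [show (1+t*d)/2 = (1+t*d) * (1/2) by ring, Real.mul_rpow hpos_t.le (by norm_num)]
    have h5 : ((1:ℝ)/2)^(δ1-δ2) ≤ 2 := by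
      have e1 : ((1:ℝ)/2)^(δ1-δ2) = 2^(δ2-δ1) := by
        rw [one_div, Real.inv_rpow (by norm_num : (0:ℝ) ≤ 2),
          ← Real.rpow_neg (by norm_num : (0:ℝ) ≤ 2)]
        ring_nf
      rw [e1]
      have h := Real.rpow_le_rpow_of_exponent_le (by norm_num : (1:ℝ) ≤ 2)
        (by linarith : δ2-δ1 ≤ 1)
      rwa [Real.rpow_one] at h
    have h6 : 0 ≤ (1+t*d)^(δ1-δ2) := Real.rpow_nonneg hpos_t.le _
    calc (t*d)^(δ1-δ2) ≤ ((1+t*d)/2)^(δ1-δ2) := h3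
    _ = (1+t*d)^(δ1-δ2) * (1/2)^(δ1-δ2) := h4
    _ ≤ (1+t*d)^(δ1-δ2) * 2 := mul_le_mul_of_nonneg_left h5 h6
    _ ≤ (m^(δ1-δ2) * (1+t)^(δ1-δ2)) * 2 := mul_le_mul_of_nonneg_right hbase1 (by norm_num)
    _ = 2 * (m^(δ1-δ2) * (1+t)^(δ1-δ2)) := by ring
  -- reduce the goal to the deterministic quantities
  have hgoal1 : u0 * Real.exp (∫ s in (0:ℝ)..t, (-fA s + Bf s)) ≤ u0 * Real.exp (F t) := by
    refine mul_le_mul_of_nonneg_left (Real.exp_le_exp.mpr ?_) hu0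
    have h1 := hcomp 0 le_rfl ht0.le
    have hF0 : F 0 = 0 := by rw [hF_def]; exact intervalIntegral.integral_same
    linarith
  have hcont_inner : ContinuousOn (fun s => ∫ h in s..t, (-fA h + Bf h))
      (Set.uIcc (0:ℝ) t) := by
    have hIntOn : IntegrableOn (fun s => -fA s + Bf s) (Set.uIcc (0:ℝ) t) volume := by
      refine Integrable.add ?_ ?_
      · exact hcont_fA.neg.integrableOn_compact isCompact_uIcc
      · exact hB_loc.integrableOn_compact_subset
          (fun x hx => grw_mem_nonneg le_rfl ht0.le hx) isCompact_uIcc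
    have h1 : ContinuousOn (fun s => ∫ h in (0:ℝ)..s, (-fA h + Bf h)) (Set.uIcc (0:ℝ) t) :=
      intervalIntegral.continuousOn_primitive_interval (f := fun h => -fA h + Bf h) hIntOn
    refine ((continuousOn_const (c := ∫ h in (0:ℝ)..t, (-fA h + Bf h))).sub h1).congr ?_
    intro s hs
    exact (intervalIntegral.integral_interval_sub_left (hint_g 0 t le_rfl ht0.le)
      (hint_g 0 s le_rfl (grw_mem_nonneg le_rfl ht0.le hs))).symm
  have hgoal2 : (∫ s in (0:ℝ)..t, Bf s * Real.exp (∫ h in s..t, (-fA h + Bf h)))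
      ≤ ∫ s in (0:ℝ)..t, fB s * Real.exp (F t - F s) := by
    have intL : IntervalIntegrable
        (fun s => Bf s * Real.exp (∫ h in s..t, (-fA h + Bf h))) volume 0 t :=
      (hint_Bf 0 t le_rfl ht0.le).mul_continuousOn
        (Real.continuous_exp.comp_continuousOn hcont_inner)
    have intR : IntervalIntegrable (fun s => fB s * Real.exp (F t - F s)) volume 0 t :=
      (hcont_fB.mul hcontE).intervalIntegrable
    refine intervalIntegral.integral_mono_on ht0.le intL intR ?_
    intro x hx
    have h4 := Real.exp_le_exp.mpr (hcomp x hx.1 hx.2)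
    calc Bf x * Real.exp (∫ h in x..t, (-fA h + Bf h))
        ≤ Bf x * Real.exp (F t - F x) :=
      mul_le_mul_of_nonneg_left h4 (hB_nonneg x hx.1)
    _ ≤ fB x * Real.exp (F t - F x) :=
      mul_le_mul_of_nonneg_right (hBf_le x hx.1) (Real.exp_pos _).le
  have hsplitJ : (∫ s in (0:ℝ)..t, fB s * Real.exp (F t - F s))
      = (∫ s in (0:ℝ)..(t/2), fB s * Real.exp (F t - F s))
        + ∫ s in (t/2)..t, fB s * Real.exp (F t - F s) := by
    refine (intervalIntegral.integral_add_adjacent_intervals ?_ ?_).symm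
    · exact ((hcont_fB.mono husub1).mul (hcontE.mono husub1)).intervalIntegrable
    · exact ((hcont_fB.mono husub2).mul (hcontE.mono husub2)).intervalIntegrable
  -- final assembly
  have hT1 : u0 * Real.exp (F t) ≤ u0 * Real.exp M2 * (2/A) * (m^(δ1-δ2) * (1+t)^(δ1-δ2)) := by
    have h1 : (1+t*d)^(-(1-δ1)) ≤ m^(δ1-δ2)*(1+t)^(δ1-δ2) := le_trans hbase0 hbase1
    have h2 : 0 ≤ u0 * Real.exp M2 * (2/A) :=
      mul_nonneg (mul_nonneg hu0 (Real.exp_pos _).le) (by positivity)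
    calc u0 * Real.exp (F t) ≤ _ := hterm1
    _ ≤ _ := mul_le_mul_of_nonneg_left h1 h2
  have hT2 : (∫ s in (0:ℝ)..(t/2), fB s * Real.exp (F t - F s))
      ≤ 64*B0/(A*(1-δ2)) * (m^(δ1-δ2) * (1+t)^(δ1-δ2)) := by
    have h2 : (0:ℝ) ≤ 32*B0/(A*(1-δ2)) := by positivity
    calc _ ≤ 32*B0/(A*(1-δ2)) * (t*d)^(δ1-δ2) := hI1
    _ ≤ 32*B0/(A*(1-δ2)) * (2*(m^(δ1-δ2)*(1+t)^(δ1-δ2))) :=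
      mul_le_mul_of_nonneg_left hbase3 h2
    _ = 64*B0/(A*(1-δ2)) * (m^(δ1-δ2)*(1+t)^(δ1-δ2)) := by ring
  have hT3 : (∫ s in (t/2)..t, fB s * Real.exp (F t - F s))
      ≤ 2*B0/A * (m2^(δ1-δ2) * (1+t)^(δ1-δ2)) := by
    have h2 : (0:ℝ) ≤ 2*B0/A := by positivity
    calc _ ≤ 2*B0/A * (1+t/2*d)^(δ1-δ2) := hI2
    _ ≤ _ := mul_le_mul_of_nonneg_left hbase2 h2
  have hfin : u0 * Real.exp (F t) + ((∫ s in (0:ℝ)..(t/2), fB s * Real.exp (F t - F s))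
      + ∫ s in (t/2)..t, fB s * Real.exp (F t - F s))
      ≤ (C1 * m^(δ1-δ2) + 2*B0/A * m2^(δ1-δ2)) * (1+t)^(δ1-δ2) := by
    have hsum : (C1 * m^(δ1-δ2) + 2*B0/A * m2^(δ1-δ2)) * (1+t)^(δ1-δ2)
        = u0 * Real.exp M2 * (2/A) * (m^(δ1-δ2) * (1+t)^(δ1-δ2))
          + 64*B0/(A*(1-δ2)) * (m^(δ1-δ2) * (1+t)^(δ1-δ2))
          + 2*B0/A * (m2^(δ1-δ2) * (1+t)^(δ1-δ2)) := by
      rw [hC1_def]; ring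
    linarith only [hT1, hT2, hT3, hsum]
  show u0 * Real.exp (∫ s in (0:ℝ)..t, (-fA s + Bf s)) +
      (∫ s in (0:ℝ)..t, Bf s * Real.exp (∫ h in s..t, (-fA h + Bf h)))
    ≤ (C1 * m ^ (δ1 - δ2) + 2 * B0 / A * m2 ^ (δ1 - δ2)) * (1 + t) ^ (δ1 - δ2)
  calc u0 * Real.exp (∫ s in (0:ℝ)..t, (-fA s + Bf s)) +
      (∫ s in (0:ℝ)..t, Bf s * Real.exp (∫ h in s..t, (-fA h + Bf h)))
      ≤ u0 * Real.exp (F t) + ∫ s in (0:ℝ)..t, fB s * Real.exp (F t - F s) := by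
        have := hgoal1; have := hgoal2; linarith
  _ = u0 * Real.exp (F t) + ((∫ s in (0:ℝ)..(t/2), fB s * Real.exp (F t - F s))
      + ∫ s in (t/2)..t, fB s * Real.exp (F t - F s)) := by rw [hsplitJ]
  _ ≤ _ := hfin
end

section
/- Let A > 0, B > 0, δ ∈ (0,1) and u0 ≥ 0, and set B_t = B (1+t)^{−δ}. Then there exist Γ > 0 and T0 ≥ 0 such that for all t ≥ T0, u0 · exp(∫_0^t (−A + B_s) ds) + ∫_0^t B_s · exp(∫_s^t (−A + B_h) dh) ds ≤ Γ (1+t)^{−δ}. -/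
open MeasureTheory intervalIntegral

open Filter Real Topology

namespace GronwallAux

lemma contOn_rpow (B δ : ℝ) :
    ContinuousOn (fun h : ℝ => B * (1 + h) ^ (-δ)) (Set.Ici 0) := by
  intro x hx
  have h1 : (1 : ℝ) + x ≠ 0 := by simp only [Set.mem_Ici] at hx; positivity
  have : ContinuousAt (fun h : ℝ => B * (1 + h) ^ (-δ)) x := by
    exact ((Real.continuousAt_rpow_const _ (-δ) (Or.inl h1)).comp
      (by fun_prop : ContinuousAt (fun h : ℝ => 1 + h) x)).const_mul B
  exact this.continuousWithinAt

lemma intF (C B δ : ℝ) {a b : ℝ} (ha : 0 ≤ a) (hb : 0 ≤ b) :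
    IntervalIntegrable (fun h : ℝ => C + B * (1 + h) ^ (-δ)) volume a b := by
  apply ContinuousOn.intervalIntegrable
  apply (continuousOn_const.add (contOn_rpow B δ)).mono
  intro x hx
  exact le_trans (le_min ha hb) hx.1

lemma intR (B δ : ℝ) {a b : ℝ} (ha : 0 ≤ a) (hb : 0 ≤ b) :
    IntervalIntegrable (fun h : ℝ => B * (1 + h) ^ (-δ)) volume a b := by
  apply ContinuousOn.intervalIntegrable
  apply (contOn_rpow B δ).mono
  intro x hx
  exact le_trans (le_min ha hb) hx.1

lemma int_rpow_eq (δ : ℝ) (hδ1 : δ < 1) (a b : ℝ) :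
    ∫ h in a..b, (1 + h) ^ (-δ) = ((1 + b) ^ (1 - δ) - (1 + a) ^ (1 - δ)) / (1 - δ) := by
  have h := intervalIntegral.integral_comp_add_left (a := a) (b := b)
    (fun u : ℝ => u ^ (-δ)) 1
  rw [h, integral_rpow (Or.inl (by linarith)), show -δ + 1 = 1 - δ by ring]


lemma stepA (A B δ : ℝ) (hA : 0 < A) (hB : 0 < B) (hδ0 : 0 < δ) (hδ1 : δ < 1)
    {s t : ℝ} (hs : 0 ≤ s) (hst : s ≤ t) :
    ∫ h in s..t, (-A + B * (1 + h) ^ (-δ)) ≤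
      B / (1 - δ) * (1 + t) ^ (1 - δ) - A / 2 * (t - s) := by
  have ht : 0 ≤ t := hs.trans hst
  have h1 : ∫ h in s..t, (-A + B * (1 + h) ^ (-δ)) ≤
      ∫ h in s..t, (-A / 2 + B * (1 + h) ^ (-δ)) := by
    apply integral_mono_on hst (intF _ _ _ hs ht) (intF _ _ _ hs ht)
    intro x _
    have : -A ≤ -A / 2 := by linarith
    linarith
  have h2 : ∫ h in s..t, (-A / 2 + B * (1 + h) ^ (-δ)) =
      -A / 2 * (t - s) + B * (((1 + t) ^ (1 - δ) - (1 + s) ^ (1 - δ)) / (1 - δ)) := by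
    rw [integral_add intervalIntegrable_const (intR B δ hs ht),
      intervalIntegral.integral_const, intervalIntegral.integral_const_mul,
      int_rpow_eq δ hδ1, smul_eq_mul]
    ring
  have hY : (0:ℝ) ≤ (1 + s) ^ (1 - δ) := Real.rpow_nonneg (by linarith) _
  have hcd : (0:ℝ) < 1 - δ := by linarith
  have h3 : B * (((1 + t) ^ (1 - δ) - (1 + s) ^ (1 - δ)) / (1 - δ)) ≤
      B / (1 - δ) * (1 + t) ^ (1 - δ) := by
    rw [show B * (((1 + t) ^ (1 - δ) - (1 + s) ^ (1 - δ)) / (1 - δ)) =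
      B / (1 - δ) * ((1 + t) ^ (1 - δ) - (1 + s) ^ (1 - δ)) by ring]
    have hc : 0 ≤ B / (1 - δ) := by positivity
    nlinarith [mul_nonneg hc hY]
  linarith

lemma stepB (A B δ : ℝ) (hδ0 : 0 < δ)
    {s t : ℝ} (h2 : t / 2 ≤ s) (hst : s ≤ t) (ht0 : 0 ≤ t)
    (hcond : B * (1 + t / 2) ^ (-δ) ≤ A / 2) (hB : 0 ≤ B) :
    ∫ h in s..t, (-A + B * (1 + h) ^ (-δ)) ≤ -(A / 2) * (t - s) := by
  have hs : 0 ≤ s := le_trans (by linarith) h2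
  have h1 : ∫ h in s..t, (-A + B * (1 + h) ^ (-δ)) ≤ ∫ _ in s..t, (-(A / 2) : ℝ) := by
    apply integral_mono_on hst (intF _ _ _ hs (hs.trans hst)) intervalIntegrable_const
    intro x hx
    have hb : (0:ℝ) < 1 + t / 2 := by linarith
    have hr : (1 + x) ^ (-δ) ≤ (1 + t / 2) ^ (-δ) :=
      Real.rpow_le_rpow_of_nonpos hb (by linarith [hx.1]) (by linarith)
    have := mul_le_mul_of_nonneg_left hr hB
    linarith
  rw [intervalIntegral.integral_const, smul_eq_mul] at h1
  linarith

lemma int_exp_eq (r : ℝ) (hr : r ≠ 0) (a b : ℝ) :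
    ∫ s in a..b, Real.exp (r * (s - b)) = (1 - Real.exp (r * (a - b))) / r := by
  have key : ∀ x ∈ Set.uIcc a b,
      HasDerivAt (fun s => Real.exp (r * (s - b)) / r) (Real.exp (r * (x - b))) x := by
    intro x _
    have h1 : HasDerivAt (fun s : ℝ => r * (s - b)) r x := by
      simpa using ((hasDerivAt_id x).sub_const b).const_mul r
    have h2 := h1.exp
    have h3 := h2.div_const r
    rwa [mul_div_cancel_right₀ _ hr] at h3
  rw [intervalIntegral.integral_eq_sub_of_hasDerivAt key
    (Continuous.intervalIntegrable (by fun_prop) a b)]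
  rw [show r * (b - b) = 0 by ring]
  simp [sub_div]


lemma main_est (A B δ u0 : ℝ) (hA : 0 < A) (hB : 0 < B) (hδ0 : 0 < δ) (hδ1 : δ < 1)
    (hu0 : 0 ≤ u0) {t : ℝ} (h1t : 1 ≤ t)
    (hcond : B * (1 + t / 2) ^ (-δ) ≤ A / 2)
    (hsmall : (u0 + B * t / 2) * Real.exp (B / (1 - δ) * (1 + t) ^ (1 - δ) - A * t / 4)
      ≤ (1 + t) ^ (-δ)) :
    u0 * Real.exp (∫ s in (0:ℝ)..t, (-A + B * (1 + s) ^ (-δ))) +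
        (∫ s in (0:ℝ)..t,
          (B * (1 + s) ^ (-δ)) * Real.exp (∫ h in s..t, (-A + B * (1 + h) ^ (-δ)))) ≤
      (1 + 4 * B / A) * (1 + t) ^ (-δ) := by
  have ht0 : (0:ℝ) ≤ t := by linarith
  have ht2 : (0:ℝ) ≤ t / 2 := by linarith
  have ht2t : t / 2 ≤ t := by linarith
  set E : ℝ := Real.exp (B / (1 - δ) * (1 + t) ^ (1 - δ) - A * t / 4) with hE
  set F : ℝ → ℝ := fun h => -A + B * (1 + h) ^ (-δ) with hF
  set G : ℝ → ℝ := fun s => (B * (1 + s) ^ (-δ)) * Real.exp (∫ h in s..t, F h) with hG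
  -- continuity of G on [0, t]
  have hFint : ∀ {a b : ℝ}, 0 ≤ a → 0 ≤ b → IntervalIntegrable F volume a b :=
    fun ha hb => intF _ _ _ ha hb
  have hGcont : ContinuousOn G (Set.Icc 0 t) := by
    have hPint : IntegrableOn F (Set.uIcc 0 t) volume := by
      rw [Set.uIcc_of_le ht0]
      apply ContinuousOn.integrableOn_Icc
      apply (continuousOn_const.add (contOn_rpow B δ)).mono
      intro x hx; exact hx.1
    have hPcont : ContinuousOn (fun s => ∫ h in (0:ℝ)..s, F h) (Set.Icc 0 t) := by
      have := intervalIntegral.continuousOn_primitive_interval (a := (0:ℝ)) (b := t) hPint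
      rwa [Set.uIcc_of_le ht0] at this
    apply ContinuousOn.congr
      (f := fun s => (B * (1 + s) ^ (-δ)) *
        Real.exp ((∫ h in (0:ℝ)..t, F h) - ∫ h in (0:ℝ)..s, F h))
    · apply ContinuousOn.mul
      · apply (contOn_rpow B δ).mono; intro x hx; exact hx.1
      · exact Real.continuous_exp.comp_continuousOn (continuousOn_const.sub hPcont)
    · intro s hs
      rw [hG]
      simp only
      rw [integral_interval_sub_left (hFint le_rfl ht0) (hFint le_rfl hs.1)]
  have hi1 : IntervalIntegrable G volume 0 (t / 2) := by
    apply ContinuousOn.intervalIntegrable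
    apply hGcont.mono
    rw [Set.uIcc_of_le ht2]
    exact Set.Icc_subset_Icc_right ht2t
  have hi2 : IntervalIntegrable G volume (t / 2) t := by
    apply ContinuousOn.intervalIntegrable
    apply hGcont.mono
    rw [Set.uIcc_of_le ht2t]
    exact Set.Icc_subset_Icc_left ht2
  have hsplit : ∫ s in (0:ℝ)..t, G s = (∫ s in (0:ℝ)..(t/2), G s) + ∫ s in (t/2)..t, G s :=
    (integral_add_adjacent_intervals hi1 hi2).symm
  -- piece 2
  have piece2 : ∫ s in (0:ℝ)..(t/2), G s ≤ (t / 2) * (B * E) := by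
    have hmono : ∫ s in (0:ℝ)..(t/2), G s ≤ ∫ _ in (0:ℝ)..(t/2), (B * E) := by
      apply integral_mono_on ht2 hi1 intervalIntegrable_const
      intro s hs
      have hs0 : 0 ≤ s := hs.1
      have hst : s ≤ t := hs.2.trans ht2t
      have hI := stepA A B δ hA hB hδ0 hδ1 hs0 hst
      have hexp : Real.exp (∫ h in s..t, F h) ≤ E := by
        rw [hE]
        apply Real.exp_le_exp.2
        have : A / 2 * (t - s) ≥ A * t / 4 := by nlinarith [hs.2]
        calc ∫ h in s..t, F h ≤ B / (1 - δ) * (1 + t) ^ (1 - δ) - A / 2 * (t - s) := hI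
          _ ≤ B / (1 - δ) * (1 + t) ^ (1 - δ) - A * t / 4 := by linarith
      have hr1 : (1 + s) ^ (-δ) ≤ 1 :=
        Real.rpow_le_one_of_one_le_of_nonpos (by linarith) (by linarith)
      have hBr : B * (1 + s) ^ (-δ) ≤ B := by
        nlinarith
      calc G s ≤ B * Real.exp (∫ h in s..t, F h) := by
            apply mul_le_mul_of_nonneg_right hBr (Real.exp_nonneg _)
        _ ≤ B * E := mul_le_mul_of_nonneg_left hexp hB.le
    rwa [intervalIntegral.integral_const, smul_eq_mul, sub_zero] at hmono
  -- piece 3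
  have hb2 : (0:ℝ) < 1 + t / 2 := by linarith
  have piece3 : ∫ s in (t/2)..t, G s ≤ 4 * B / A * (1 + t) ^ (-δ) := by
    set D : ℝ := B * (1 + t / 2) ^ (-δ) with hD
    have hD0 : 0 ≤ D := by positivity
    have hmono : ∫ s in (t/2)..t, G s ≤
        ∫ s in (t/2)..t, D * Real.exp ((A / 2) * (s - t)) := by
      apply integral_mono_on ht2t hi2 (Continuous.intervalIntegrable (by fun_prop) _ _)
      intro s hs
      have hBr : B * (1 + s) ^ (-δ) ≤ D := by
        rw [hD]
        apply mul_le_mul_of_nonneg_left _ hB.le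
        exact Real.rpow_le_rpow_of_nonpos hb2 (by linarith [hs.1]) (by linarith)
      have hexp : Real.exp (∫ h in s..t, F h) ≤ Real.exp ((A / 2) * (s - t)) := by
        apply Real.exp_le_exp.2
        have := stepB A B δ hδ0 hs.1 hs.2 ht0 hcond hB.le
        calc ∫ h in s..t, F h ≤ -(A / 2) * (t - s) := this
          _ = (A / 2) * (s - t) := by ring
      calc G s ≤ D * Real.exp (∫ h in s..t, F h) :=
            mul_le_mul_of_nonneg_right hBr (Real.exp_nonneg _)
        _ ≤ D * Real.exp ((A / 2) * (s - t)) := mul_le_mul_of_nonneg_left hexp hD0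
    have hcomp : ∫ s in (t/2)..t, D * Real.exp ((A / 2) * (s - t)) ≤ D * (2 / A) := by
      rw [intervalIntegral.integral_const_mul, int_exp_eq (A / 2) (by positivity)]
      apply mul_le_mul_of_nonneg_left _ hD0
      rw [div_le_div_iff₀ (by positivity) hA]
      nlinarith [Real.exp_nonneg ((A / 2) * (t / 2 - t))]
    have hDle : D ≤ B * (2 * (1 + t) ^ (-δ)) := by
      rw [hD]
      apply mul_le_mul_of_nonneg_left _ hB.le
      have hbt : (0:ℝ) < 1 + t := by linarith
      have e1 : (1 + t / 2) ^ (-δ) ≤ ((1 + t) / 2) ^ (-δ) :=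
        Real.rpow_le_rpow_of_nonpos (by positivity) (by linarith) (by linarith)
      have e2 : ((1 + t) / 2) ^ (-δ) = (1 + t) ^ (-δ) * (2:ℝ) ^ δ := by
        rw [Real.div_rpow hbt.le (by norm_num : (0:ℝ) ≤ 2), Real.rpow_neg (by norm_num : (0:ℝ) ≤ 2),
          div_inv_eq_mul]
      have e3 : (2:ℝ) ^ δ ≤ 2 := by
        calc (2:ℝ) ^ δ ≤ (2:ℝ) ^ (1:ℝ) :=
              Real.rpow_le_rpow_of_exponent_le one_le_two hδ1.le
          _ = 2 := Real.rpow_one 2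
      have hpnn : (0:ℝ) ≤ (1 + t) ^ (-δ) := Real.rpow_nonneg hbt.le _
      calc (1 + t / 2) ^ (-δ) ≤ (1 + t) ^ (-δ) * (2:ℝ) ^ δ := by rw [← e2]; exact e1
        _ ≤ (1 + t) ^ (-δ) * 2 := mul_le_mul_of_nonneg_left e3 hpnn
        _ = 2 * (1 + t) ^ (-δ) := by ring
    calc ∫ s in (t/2)..t, G s ≤ D * (2 / A) := hmono.trans hcomp
      _ ≤ (B * (2 * (1 + t) ^ (-δ))) * (2 / A) :=
          mul_le_mul_of_nonneg_right hDle (by positivity)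
      _ = 4 * B / A * (1 + t) ^ (-δ) := by ring
  -- term 1
  have term1 : u0 * Real.exp (∫ s in (0:ℝ)..t, F s) ≤ u0 * E := by
    apply mul_le_mul_of_nonneg_left _ hu0
    rw [hE]
    apply Real.exp_le_exp.2
    have hI := stepA A B δ hA hB hδ0 hδ1 le_rfl ht0
    calc ∫ h in (0:ℝ)..t, F h ≤ B / (1 - δ) * (1 + t) ^ (1 - δ) - A / 2 * (t - 0) := hI
      _ ≤ B / (1 - δ) * (1 + t) ^ (1 - δ) - A * t / 4 := by nlinarith
  -- combine
  have key : u0 * Real.exp (∫ s in (0:ℝ)..t, F s) + ∫ s in (0:ℝ)..t, G s ≤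
      (u0 + B * t / 2) * E + 4 * B / A * (1 + t) ^ (-δ) := by
    rw [hsplit]
    have : u0 * E + ((t / 2) * (B * E) + 4 * B / A * (1 + t) ^ (-δ)) =
        (u0 + B * t / 2) * E + 4 * B / A * (1 + t) ^ (-δ) := by ring
    linarith
  calc u0 * Real.exp (∫ s in (0:ℝ)..t, F s) + ∫ s in (0:ℝ)..t, G s
      ≤ (u0 + B * t / 2) * E + 4 * B / A * (1 + t) ^ (-δ) := key
    _ ≤ (1 + t) ^ (-δ) + 4 * B / A * (1 + t) ^ (-δ) := by
        have := hsmall; rw [hE]; linarith [hsmall]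
    _ = (1 + 4 * B / A) * (1 + t) ^ (-δ) := by ring

end GronwallAux



/-- Integrated Grönwall bound in the case `m* = 0`: with a constant drift `A > 0` and
perturbation `B_t = B (1+t)^{-δ}` with `δ ∈ (0,1)`, the quantity
`u₀ e^{∫₀ᵗ (-A + B_s) ds} + ∫₀ᵗ B_s e^{∫_sᵗ (-A + B_h) dh} ds` is eventually bounded
by `Γ (1+t)^{-δ}`. -/
theorem gronwall_bound_constant_gap
    (A B δ u0 : ℝ) (hA : 0 < A) (hB : 0 < B) (hδ : δ ∈ Set.Ioo (0:ℝ) 1) (hu0 : 0 ≤ u0) :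
    ∃ (Γ T0 : ℝ), 0 < Γ ∧ 0 ≤ T0 ∧ ∀ t ≥ T0,
      u0 * Real.exp (∫ s in (0:ℝ)..t, (-A + B * (1 + s) ^ (-δ))) +
        (∫ s in (0:ℝ)..t,
          (B * (1 + s) ^ (-δ)) * Real.exp (∫ h in s..t, (-A + B * (1 + h) ^ (-δ)))) ≤
      Γ * (1 + t) ^ (-δ) := by
  obtain ⟨hδ0, hδ1⟩ := hδ
  have hd : (0:ℝ) < 1 - δ := by linarith
  have hc0 : (0:ℝ) < B / (1 - δ) := div_pos hB hd
  -- eventually conditions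
  have hbt : Tendsto (fun t : ℝ => 1 + t / 2) atTop atTop :=
    tendsto_atTop_add_const_left atTop 1 (tendsto_id.atTop_div_const (by norm_num))
  have h0 : Tendsto (fun t : ℝ => B * (1 + t / 2) ^ (-δ)) atTop (𝓝 0) := by
    have := ((tendsto_rpow_neg_atTop hδ0).comp hbt).const_mul B
    simpa using this
  have Econd : ∀ᶠ t : ℝ in atTop, B * (1 + t / 2) ^ (-δ) ≤ A / 2 :=
    h0.eventually (eventually_le_nhds (by positivity))
  have h0' : Tendsto (fun t : ℝ => (1 + t) ^ (-δ)) atTop (𝓝 0) :=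
    (tendsto_rpow_neg_atTop hδ0).comp (tendsto_atTop_add_const_left atTop 1 tendsto_id)
  have E4 : ∀ᶠ t : ℝ in atTop, (1 + t) ^ (-δ) ≤ A / (16 * (B / (1 - δ))) :=
    h0'.eventually (eventually_le_nhds (by positivity))
  have hb8 : (0:ℝ) < A / 8 := by positivity
  have hexp0 : Tendsto (fun t : ℝ => Real.exp (-(A / 8) * t)) atTop (𝓝 0) := by
    simpa using tendsto_rpow_mul_exp_neg_mul_atTop_nhds_zero 0 (A / 8) hb8
  have hlin : Tendsto (fun t : ℝ => t * Real.exp (-(A / 8) * t)) atTop (𝓝 0) := by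
    simpa using tendsto_rpow_mul_exp_neg_mul_atTop_nhds_zero 1 (A / 8) hb8
  have hquad : Tendsto (fun t : ℝ => t ^ 2 * Real.exp (-(A / 8) * t)) atTop (𝓝 0) := by
    apply (tendsto_rpow_mul_exp_neg_mul_atTop_nhds_zero 2 (A / 8) hb8).congr'
    filter_upwards [eventually_ge_atTop (0:ℝ)] with t ht
    rw [show ((2:ℝ)) = ((2:ℕ):ℝ) by norm_num, Real.rpow_natCast]
  have hk : Tendsto (fun t : ℝ => (u0 + B * t / 2) * (1 + t) * Real.exp (-(A / 8) * t))
      atTop (𝓝 0) := by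
    have hsum := (hexp0.const_mul u0).add
      ((hlin.const_mul (u0 + B / 2)).add (hquad.const_mul (B / 2)))
    simp only [mul_zero, add_zero] at hsum
    apply hsum.congr
    intro t; ring
  have hg : Tendsto (fun t : ℝ => (u0 + B * t / 2) * (1 + t) ^ δ *
      Real.exp (B / (1 - δ) * (1 + t) ^ (1 - δ) - A * t / 4)) atTop (𝓝 0) := by
    apply tendsto_of_tendsto_of_tendsto_of_le_of_le' tendsto_const_nhds hk
    · filter_upwards [eventually_ge_atTop (0:ℝ)] with t ht
      have hbt0 : (0:ℝ) ≤ 1 + t := by linarith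
      exact mul_nonneg (mul_nonneg (by nlinarith) (Real.rpow_nonneg hbt0 _))
        (Real.exp_nonneg _)
    · filter_upwards [eventually_ge_atTop (1:ℝ), E4] with t h1 h4
      have hb0 : (0:ℝ) < 1 + t := by linarith
      have e1 : (1 + t) ^ δ ≤ 1 + t := by
        calc (1 + t) ^ δ ≤ (1 + t) ^ (1:ℝ) :=
              Real.rpow_le_rpow_of_exponent_le (by linarith) hδ1.le
          _ = 1 + t := Real.rpow_one _
      have e2 : B / (1 - δ) * (1 + t) ^ (1 - δ) ≤ A * t / 8 := by
        have hsplit : (1 + t) ^ (1 - δ) = (1 + t) * (1 + t) ^ (-δ) := by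
          rw [show (1:ℝ) - δ = 1 + (-δ) by ring, Real.rpow_add hb0, Real.rpow_one]
        rw [hsplit]
        have h5 : B / (1 - δ) * ((1 + t) * (1 + t) ^ (-δ)) ≤
            B / (1 - δ) * ((1 + t) * (A / (16 * (B / (1 - δ))))) := by
          apply mul_le_mul_of_nonneg_left _ hc0.le
          exact mul_le_mul_of_nonneg_left h4 (by linarith)
        have h6 : B / (1 - δ) * ((1 + t) * (A / (16 * (B / (1 - δ))))) = A * (1 + t) / 16 := by
          field_simp
        nlinarith
      have eexp : Real.exp (B / (1 - δ) * (1 + t) ^ (1 - δ) - A * t / 4) ≤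
          Real.exp (-(A / 8) * t) := by
        apply Real.exp_le_exp.2
        nlinarith
      have hnn1 : (0:ℝ) ≤ u0 + B * t / 2 := by nlinarith
      calc (u0 + B * t / 2) * (1 + t) ^ δ *
            Real.exp (B / (1 - δ) * (1 + t) ^ (1 - δ) - A * t / 4)
          ≤ (u0 + B * t / 2) * (1 + t) *
            Real.exp (B / (1 - δ) * (1 + t) ^ (1 - δ) - A * t / 4) :=
            mul_le_mul_of_nonneg_right (mul_le_mul_of_nonneg_left e1 hnn1)
              (Real.exp_nonneg _)
        _ ≤ (u0 + B * t / 2) * (1 + t) * Real.exp (-(A / 8) * t) :=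
            mul_le_mul_of_nonneg_left eexp (mul_nonneg hnn1 (by linarith))
  have Esmall : ∀ᶠ t : ℝ in atTop,
      (u0 + B * t / 2) * Real.exp (B / (1 - δ) * (1 + t) ^ (1 - δ) - A * t / 4) ≤
        (1 + t) ^ (-δ) := by
    filter_upwards [hg.eventually (eventually_le_nhds one_pos), eventually_ge_atTop (0:ℝ)]
      with t hgt ht0
    have hb0 : (0:ℝ) < 1 + t := by linarith
    have hone : (1 + t) ^ δ * (1 + t) ^ (-δ) = 1 := by
      rw [← Real.rpow_add hb0]; simp
    have key : ((u0 + B * t / 2) * (1 + t) ^ δ *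
        Real.exp (B / (1 - δ) * (1 + t) ^ (1 - δ) - A * t / 4)) * (1 + t) ^ (-δ) =
        (u0 + B * t / 2) * Real.exp (B / (1 - δ) * (1 + t) ^ (1 - δ) - A * t / 4) := by
      linear_combination ((u0 + B * t / 2) *
        Real.exp (B / (1 - δ) * (1 + t) ^ (1 - δ) - A * t / 4)) * hone
    rw [← key]
    have := mul_le_mul_of_nonneg_right hgt (Real.rpow_nonneg hb0.le (-δ))
    linarith
  obtain ⟨a, ha⟩ := eventually_atTop.mp ((Econd.and Esmall).and (eventually_ge_atTop (1:ℝ)))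
  refine ⟨1 + 4 * B / A, max a 1, by positivity,
    le_trans zero_le_one (le_max_right a 1), fun t ht => ?_⟩
  obtain ⟨⟨hcond, hsmall⟩, h1t⟩ := ha t (le_trans (le_max_left a 1) ht)
  exact GronwallAux.main_est A B δ u0 hA hB hδ0 hδ1 hu0 h1t hcond hsmall
end
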